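/- arXiv:2508.18511 — 8 statements merged into one kernel-verified Lean document; each statement's English description precedes it below -/
import Mathlib

section
/- Let N>1 be an integer and let n be an integer with 0 ≤ n ≤ N and gcd(N,n) > 1. Then the point z = n/N lies on the topological boundary (frontier) of R_N as a subset of ℂ. -/
namespace Paper

noncomputable section

/-- Closed disk attached to a rational `α = a/b` in lowest terms:
center `α`, radius `1/b`. -/
def disk (α : ℚ) : Set ℂ := Metric.closedBall (α : ℂ) (1 / (α.den : ℝ))

/-- The closed disk `D_{a/b}` of radius `1/b` centered at `a/b`. -/
def diskAt (a b : ℕ) : Set ℂ := Metric.closedBall ((a : ℂ) / (b : ℂ)) (1 / (b : ℝ))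

/-- The north pole `P_α = a/b + i/b` of the disk of `α = a/b` in lowest terms. -/
def northPole (α : ℚ) : ℂ := (α : ℂ) + Complex.I / (α.den : ℂ)

/-- Complexity of the north pole of `α` relative to a set `S` of rationals:
the number of `β ∈ S`, `β ≠ α`, whose disk contains `P_α`. -/
def poleComplexity (S : Set ℚ) (α : ℚ) : ℕ :=
  {β ∈ S | β ≠ α ∧ northPole α ∈ disk β}.ncard

/-- Rationals `a/b ∈ [0,1]` in lowest terms with `N ∣ b`. -/
def cand (N : ℕ) : Set ℚ := {α | 0 ≤ α ∧ α ≤ 1 ∧ N ∣ α.den}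

/-- The region `R_N`. -/
def RN (N : ℕ) : Set ℂ := ⋃ α ∈ cand N, disk α

/-- The set `S_N`: those `α` whose disk is not covered by the other disks. -/
def SSet (N : ℕ) : Set ℚ :=
  {α | α ∈ cand N ∧ ¬ disk α ⊆ ⋃ β ∈ cand N \ {α}, disk β}

/-- The complexity `c(N)`: the maximum of the complexities of north poles of `α ∈ S_N`. -/
def cN (N : ℕ) : ℕ := sSup (poleComplexity (SSet N) '' SSet N)

/-- denominator of a/M when coprime -/
lemma den_div (a M : ℕ) (hM : 0 < M) (hcop : Nat.Coprime a M) :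
    ((a : ℚ) / (M : ℚ)).den = M := by
  have h := Rat.den_div_eq_of_coprime (a := (a:ℤ)) (b := (M:ℤ))
    (by exact_mod_cast hM) (by simpa using hcop)
  have h2 : ((a:ℤ):ℚ) / ((M:ℤ):ℚ) = (a:ℚ)/(M:ℚ) := by push_cast; ring
  rw [h2] at h
  exact_mod_cast h

lemma abs_sub_ge (N n : ℕ) (hN : 1 < N) (hg : 1 < Nat.gcd N n) (α : ℚ)
    (hd : N ∣ α.den) : 1 / (α.den : ℝ) ≤ |(n : ℝ) / N - (α : ℝ)| := by
  obtain ⟨k, hk⟩ := hd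
  have hNpos : 0 < N := by omega
  have hdenpos : 0 < α.den := α.pos
  have hk0 : 0 < k := by
    rcases Nat.eq_zero_or_pos k with h | h
    · rw [h, mul_zero] at hk; omega
    · exact h
  have hm : (n:ℤ) * k - α.num ≠ 0 := by
    intro h
    have hnum : α.num = (n:ℤ) * k := by omega
    have hα : (α : ℚ) = (n : ℚ) / N := by
      rw [← Rat.num_div_den α, hnum, hk]
      push_cast
      rw [mul_div_mul_right _ _ (by exact_mod_cast hk0.ne' : (k:ℚ) ≠ 0)]
    set d := Nat.gcd N n with hd
    have hdN : d ∣ N := Nat.gcd_dvd_left N n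
    have hdn : d ∣ n := Nat.gcd_dvd_right N n
    have hdpos : 0 < d := by omega
    have hNd : ((N/d : ℕ) : ℚ) * d = N := by exact_mod_cast Nat.div_mul_cancel hdN
    have hnd : ((n/d : ℕ) : ℚ) * d = n := by exact_mod_cast Nat.div_mul_cancel hdn
    have hNdpos : 0 < N / d := Nat.div_pos (Nat.le_of_dvd hNpos hdN) hdpos
    have hα2 : (α : ℚ) = ((n/d : ℕ) : ℚ) / ((N/d : ℕ) : ℚ) := by
      rw [hα]
      rw [div_eq_div_iff (by exact_mod_cast hNpos.ne' : ((N:ℚ)) ≠ 0)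
        (by exact_mod_cast hNdpos.ne' : (((N/d : ℕ):ℚ)) ≠ 0)]
      rw [← hNd, ← hnd]; ring
    have hα3 : (α : ℚ) = (((n/d : ℕ):ℤ) : ℚ) / (((N/d : ℕ):ℤ) : ℚ) := by
      rw [hα2, Int.cast_natCast, Int.cast_natCast]
    have hdvd : α.den ∣ N / d := by
      have := Rat.den_dvd ((n/d : ℕ):ℤ) ((N/d : ℕ):ℤ)
      rw [Rat.divInt_eq_div, ← hα3] at this
      exact_mod_cast this
    have h1 : N ≤ α.den := Nat.le_of_dvd hdenpos ⟨k, hk⟩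
    have h2 : α.den ≤ N / d := Nat.le_of_dvd hNdpos hdvd
    have h3 : N / d < N := Nat.div_lt_self hNpos hg
    omega
  have hkR : (α.den : ℝ) = (N : ℝ) * k := by exact_mod_cast hk
  have hαR : (α : ℝ) = (α.num : ℝ) / (α.den : ℝ) := Rat.cast_def α
  have he : (n:ℝ)/N - (α:ℝ) = (((n:ℤ)*k - α.num : ℤ) : ℝ) / (α.den : ℝ) := by
    rw [hαR, hkR]
    have hN0 : (N:ℝ) ≠ 0 := by positivity
    have hk0' : (k:ℝ) ≠ 0 := by exact_mod_cast hk0.ne'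
    field_simp
    push_cast
    ring
  rw [he, abs_div, abs_of_pos (by positivity : (0:ℝ) < (α.den:ℝ))]
  have h1 : (1:ℝ) ≤ |(((n:ℤ)*k - α.num : ℤ) : ℝ)| := by
    exact_mod_cast Int.one_le_abs hm
  gcongr

lemma exists_cand (N n k : ℕ) (hN : 1 < N) (hn : n ≤ N) :
    ∃ α ∈ cand N, |(n:ℝ)/N - (α:ℝ)| = 1/(N:ℝ)^(k+2) := by
  have hNpos : 0 < N := by omega
  set M := N^(k+2) with hMdef
  have hM : 0 < M := Nat.pow_pos hNpos
  have hNM : N ∣ M := dvd_pow_self N (by omega)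
  have hMR : (M:ℝ) = (N:ℝ)^(k+2) := by push_cast [hMdef]; ring
  have hNR : (0:ℝ) < N := by exact_mod_cast hNpos
  have hMR0 : (0:ℝ) < (M:ℝ) := by exact_mod_cast hM
  rcases eq_or_lt_of_le hn with heq | hlt
  · -- n = N
    subst heq
    set a := M - 1 with hadef
    have hcop : Nat.Coprime a M := by
      have h1 : M - a = 1 := by omega
      have := Nat.dvd_sub (Nat.gcd_dvd_right a M) (Nat.gcd_dvd_left a M)
      rw [h1] at this
      exact Nat.dvd_one.mp this
    refine ⟨(a:ℚ)/(M:ℚ), ⟨by positivity, ?_, ?_⟩, ?_⟩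
    · rw [div_le_one (by exact_mod_cast hM)]
      exact_mod_cast Nat.sub_le M 1
    · rw [den_div a M hM hcop]; exact hNM
    · have haR : (a:ℝ) = (M:ℝ) - 1 := by
        rw [hadef]; exact_mod_cast Nat.cast_sub (by omega)
      have hcast : (((a:ℚ)/(M:ℚ) : ℚ) : ℝ) = (a:ℝ)/(M:ℝ) := by push_cast; ring
      rw [hcast, haR, ← hMR]
      rw [div_self (by positivity : (n:ℝ) ≠ 0)]
      rw [abs_of_nonneg]
      · field_simp; ring
      · have : ((M:ℝ)-1)/(M:ℝ) ≤ 1 := by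
          rw [div_le_one hMR0]; linarith
        linarith
  · -- n < N
    set a := n * N^(k+1) + 1 with hadef
    have hcop : Nat.Coprime a M := by
      have hcN : Nat.Coprime a N := by
        have : ∀ d : ℕ, d ∣ a → d ∣ N → d ∣ 1 := by
          intro d h1 h2
          have h3 : d ∣ n * N^(k+1) := Dvd.dvd.mul_left (h2.trans (dvd_pow_self N (by omega))) n
          have := Nat.dvd_sub h1 h3
          simpa [hadef] using this
        exact Nat.dvd_one.mp (this _ (Nat.gcd_dvd_left a N) (Nat.gcd_dvd_right a N))
      exact hcN.pow_right _
    have haM : a ≤ M := by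
      have h1 : a ≤ (n+1) * N^(k+1) := by
        rw [hadef, add_mul, one_mul]
        have : 1 ≤ N^(k+1) := Nat.one_le_pow _ _ hNpos
        omega
      have h2 : (n+1) * N^(k+1) ≤ N * N^(k+1) := Nat.mul_le_mul_right _ (by omega)
      have h3 : N * N^(k+1) = M := by rw [hMdef]; ring
      omega
    refine ⟨(a:ℚ)/(M:ℚ), ⟨by positivity, ?_, ?_⟩, ?_⟩
    · rw [div_le_one (by exact_mod_cast hM)]
      exact_mod_cast haM
    · rw [den_div a M hM hcop]; exact hNM
    · have hcast : (((a:ℚ)/(M:ℚ) : ℚ) : ℝ) = (a:ℝ)/(M:ℝ) := by push_cast; ring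
      have haR : (a:ℝ) = (n:ℝ) * (N:ℝ)^(k+1) + 1 := by rw [hadef]; push_cast; ring
      rw [hcast, haR, ← hMR]
      have he : (n:ℝ)/N - ((n:ℝ) * (N:ℝ)^(k+1) + 1)/(M:ℝ) = -(1/(M:ℝ)) := by
        rw [hMR]
        field_simp
        ring
      rw [he, abs_neg, abs_of_nonneg (by positivity)]

/-- For `0 ≤ n ≤ N` with `gcd(N,n) > 1`, the point `n/N` lies on the
topological boundary of `R_N`. -/
theorem mem_frontier_of_gcd_gt_one (N n : ℕ) (hN : 1 < N) (hn : n ≤ N)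
    (hg : 1 < Nat.gcd N n) :
    ((n : ℂ) / (N : ℂ)) ∈ frontier (RN N) := by
  have hNpos : 0 < N := by omega
  have hNR : (0:ℝ) < N := by exact_mod_cast hNpos
  have hz : ((n:ℂ)/(N:ℂ)) = (((n:ℝ)/N : ℝ) : ℂ) := by push_cast; ring
  rw [frontier, Set.mem_diff]
  constructor
  · -- closure
    rw [Metric.mem_closure_iff]
    intro ε hε
    obtain ⟨k, hk⟩ := pow_unbounded_of_one_lt (ε⁻¹) ((by exact_mod_cast hN) : (1:ℝ) < (N:ℝ))
    obtain ⟨α, hα, hdist⟩ := exists_cand N n k hN hn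
    refine ⟨(α:ℂ), Set.mem_biUnion hα (Metric.mem_closedBall_self (by positivity)), ?_⟩
    have hd : dist ((n:ℂ)/(N:ℂ)) ((α:ℂ)) = |(n:ℝ)/N - (α:ℝ)| := by
      rw [Complex.dist_eq, hz]
      have : (((n:ℝ)/N:ℝ):ℂ) - ((α:ℚ):ℂ) = (((n:ℝ)/N - (α:ℝ) : ℝ):ℂ) := by push_cast; ring
      rw [this, Complex.norm_real, Real.norm_eq_abs]
    rw [hd, hdist]
    have hNk : (0:ℝ) < (N:ℝ)^k := by positivity
    have h2 : (1:ℝ)/(N:ℝ)^k < ε := by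
      rw [div_lt_iff₀ hNk]
      have : ε⁻¹ * ε < ((N:ℝ)^k) * ε := by
        apply mul_lt_mul_of_pos_right hk hε
      rw [inv_mul_cancel₀ hε.ne'] at this
      linarith
    have h1 : (1:ℝ)/(N:ℝ)^(k+2) ≤ 1/(N:ℝ)^k := by
      apply one_div_le_one_div_of_le hNk
      exact pow_le_pow_right₀ (by exact_mod_cast hN.le) (by omega)
    linarith
  · -- not interior
    intro hint
    rw [mem_interior_iff_mem_nhds, Metric.mem_nhds_iff] at hint
    obtain ⟨ε, hε, hsub⟩ := hint
    set w : ℂ := (((n:ℝ)/N : ℝ) : ℂ) + (ε/2) * Complex.I with hwdef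
    have hw : w ∈ RN N := by
      apply hsub
      rw [Metric.mem_ball, hz]
      have : dist w ((((n:ℝ)/N : ℝ)) : ℂ) = ε/2 := by
        have he : w - (((n:ℝ)/N : ℝ) : ℂ) = ((ε/2 : ℝ) : ℂ) * Complex.I := by
          rw [hwdef]; push_cast; ring
        rw [dist_eq_norm, he, norm_mul, Complex.norm_I, mul_one,
          Complex.norm_real, Real.norm_eq_abs, abs_of_pos (by linarith)]
      rw [this]; linarith
    simp only [RN, Set.mem_iUnion, exists_prop] at hw
    obtain ⟨α, hα, hwα⟩ := hw
    have hge := abs_sub_ge N n hN hg α hα.2.2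
    rw [disk, Metric.mem_closedBall] at hwα
    have hdenpos : (0:ℝ) < (α.den : ℝ) := by exact_mod_cast α.pos
    have hsq : dist w ((α:ℚ):ℂ)^2 = ((n:ℝ)/N - (α:ℝ))^2 + (ε/2)^2 := by
      rw [Complex.dist_eq, Complex.sq_norm, Complex.normSq_apply, hwdef]
      simp [Complex.add_re, Complex.add_im, Complex.mul_re, Complex.mul_im,
        Complex.I_re, Complex.I_im, Complex.ofReal_re, Complex.ofReal_im]
      ring
    nlinarith [sq_abs ((n:ℝ)/N - (α:ℝ)), dist_nonneg (x := w) (y := ((α:ℚ):ℂ)),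
      sq_nonneg ((n:ℝ)/N - (α:ℝ)), hε]


end

end Paper
end

section
/- Let (N,n) be a good pair, i.e., integers with N>1, 0 ≤ n ≤ N−1, gcd(N,n) > 1 and gcd(N,n+1) = 1, and let n' be the least integer greater than n with gcd(N,n') > 1. Then R_{N,n} = ⋃_{n < a < n'} D_{a/N}, where the union is over integers a with n < a < n'. In particular, c(N,n) = 0. -/
namespace Paper

noncomputable section

/-- The least integer `n' > n` with `gcd(N,n') > 1`. -/
def nxt (N n : ℕ) : ℕ := sInf {m | n < m ∧ 1 < Nat.gcd N m}

/-- Rationals `a/b ∈ [n/N, n'/N]` in lowest terms with `N ∣ b`. -/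
def candP (N n : ℕ) : Set ℚ :=
  {α | (n : ℚ) / (N : ℚ) ≤ α ∧ α ≤ (nxt N n : ℚ) / (N : ℚ) ∧ N ∣ α.den}

/-- The region `R_{N,n}` for a pair `(N,n)`. -/
def RP (N n : ℕ) : Set ℂ := ⋃ α ∈ candP N n, disk α

/-- The set `S_{N,n}` for a pair `(N,n)`. -/
def SP (N n : ℕ) : Set ℚ :=
  {α | α ∈ candP N n ∧ ¬ disk α ⊆ ⋃ β ∈ candP N n \ {α}, disk β}

/-- The complexity `c(N,n)` for a pair `(N,n)`. -/
def cP (N n : ℕ) : ℕ := sSup (poleComplexity (SP N n) '' SP N n)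

/-! ### Auxiliary lemmas -/

lemma nxt_mem (N n : ℕ) (hN : 1 < N) (hg : 1 < Nat.gcd N n) :
    n < nxt N n ∧ 1 < Nat.gcd N (nxt N n) := by
  have : nxt N n ∈ {m | n < m ∧ 1 < Nat.gcd N m} := by
    apply Nat.sInf_mem
    refine ⟨n + N, by omega, ?_⟩
    rwa [Nat.gcd_add_self_right]
  exact this

lemma gcd_between (N n m : ℕ) (hN : 1 < N) (h1 : n < m) (h2 : m < nxt N n) :
    Nat.gcd N m = 1 := by
  have h := Nat.notMem_of_lt_sInf (show m < sInf {m | n < m ∧ 1 < Nat.gcd N m} from h2)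
  simp only [Set.mem_setOf_eq, not_and, not_lt] at h
  have h3 := h h1
  have h4 : Nat.gcd N m ≠ 0 := by
    intro h0
    have := Nat.eq_zero_of_gcd_eq_zero_left h0
    omega
  omega

lemma nxt_ge (N n : ℕ) (hN : 1 < N) (hg : 1 < Nat.gcd N n)
    (hgood : Nat.gcd N (n + 1) = 1) : n + 2 ≤ nxt N n := by
  have hm := nxt_mem N n hN hg
  have : nxt N n ≠ n + 1 := by
    intro h
    rw [h, hgood] at hm
    omega
  omega

lemma ne_endpoint (N m : ℕ) (hN : 1 < N) (hm : 1 < Nat.gcd N m) {α : ℚ}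
    (hden : N ∣ α.den) (heq : α = (m : ℚ) / (N : ℚ)) : False := by
  have hdvd : (α.den : ℤ) ∣ (N : ℤ) := by
    have h1 : α = ((m : ℤ) : ℚ) / ((N : ℤ) : ℚ) := by rw [heq]; push_cast; ring
    rw [h1, ← Rat.divInt_eq_div]
    exact Rat.den_dvd _ _
  have hdvd' : α.den ∣ N := by exact_mod_cast hdvd
  have hdeq : α.den = N := Nat.dvd_antisymm hdvd' hden
  have hnum : (α.num : ℚ) = (m : ℚ) := by
    have h := heq
    rw [← Rat.num_div_den α, hdeq] at h
    have hN0 : ((N : ℚ)) ≠ 0 := by positivity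
    field_simp at h
    exact h
  have hnum' : α.num = (m : ℤ) := by exact_mod_cast hnum
  have hcop := α.reduced
  rw [hnum', hdeq] at hcop
  simp only [Int.natAbs_natCast] at hcop
  have : Nat.gcd N m = 1 := Nat.Coprime.gcd_eq_one (Nat.coprime_comm.mp hcop)
  omega

lemma strict_bounds (N n : ℕ) (hN : 1 < N) (hg : 1 < Nat.gcd N n) {α : ℚ}
    (hα : α ∈ candP N n) :
    (n : ℤ) * α.den < α.num * N ∧ α.num * (N : ℤ) < (nxt N n : ℤ) * α.den := by
  obtain ⟨h1, h2, h3⟩ := hα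
  have hg' : 1 < Nat.gcd N (nxt N n) := (nxt_mem N n hN hg).2
  have hN0 : (0 : ℚ) < (N : ℚ) := by exact_mod_cast Nat.zero_lt_of_lt hN
  have hb0 : (0 : ℚ) < (α.den : ℚ) := by exact_mod_cast α.pos
  have hne1 : α ≠ (n : ℚ) / (N : ℚ) := fun h => ne_endpoint N n hN hg h3 h
  have hne2 : α ≠ (nxt N n : ℚ) / (N : ℚ) := fun h => ne_endpoint N (nxt N n) hN hg' h3 h
  constructor
  · have e1 : (n : ℚ) / (N : ℚ) < (α.num : ℚ) / (α.den : ℚ) := by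
      rw [Rat.num_div_den]; exact lt_of_le_of_ne h1 (Ne.symm hne1)
    rw [div_lt_div_iff₀ hN0 hb0] at e1
    exact_mod_cast e1
  · have e2 : (α.num : ℚ) / (α.den : ℚ) < (nxt N n : ℚ) / (N : ℚ) := by
      rw [Rat.num_div_den]; exact lt_of_le_of_ne h2 hne2
    rw [div_lt_div_iff₀ hb0 hN0] at e2
    exact_mod_cast e2

lemma int_mem (N n : ℕ) (hN : 1 < N) (c : ℕ) (h1 : n < c) (h2 : c < nxt N n) :
    ((c : ℚ) / (N : ℚ)) ∈ candP N n ∧ ((c : ℚ) / (N : ℚ)).den = N := by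
  have hcop := gcd_between N n c hN h1 h2
  have hNZ : (0 : ℤ) < (N : ℤ) := by exact_mod_cast Nat.zero_lt_of_lt hN
  have hden : ((c : ℚ) / (N : ℚ)).den = N := by
    have hcast : (((c : ℤ) : ℚ)) / (((N : ℤ) : ℚ)) = (c : ℚ) / (N : ℚ) := by push_cast; ring
    have h0 := Rat.den_div_eq_of_coprime (a := (c : ℤ)) (b := (N : ℤ)) hNZ
      (by simpa using Nat.coprime_comm.mp hcop)
    rw [hcast] at h0
    exact_mod_cast h0
  have hNQ : (0 : ℚ) < (N : ℚ) := by exact_mod_cast Nat.zero_lt_of_lt hN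
  refine ⟨⟨?_, ?_, by rw [hden]⟩, hden⟩
  · rw [div_le_div_iff₀ hNQ hNQ]
    exact mul_le_mul_of_nonneg_right (by exact_mod_cast h1.le) hNQ.le
  · rw [div_le_div_iff₀ hNQ hNQ]
    exact mul_le_mul_of_nonneg_right (by exact_mod_cast h2.le) hNQ.le

lemma cover (N n : ℕ) (hN : 1 < N) (hg : 1 < Nat.gcd N n) (hgood : Nat.gcd N (n + 1) = 1)
    {α : ℚ} (hα : α ∈ candP N n) (hden : α.den ≠ N) :
    ∃ c : ℕ, c ∈ Set.Ioo n (nxt N n) ∧ disk α ⊆ disk ((c : ℚ) / (N : ℚ)) := by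
  obtain ⟨hs1, hs2⟩ := strict_bounds N n hN hg hα
  obtain ⟨-, -, hdvd⟩ := hα
  have hb0 : (0 : ℤ) < (α.den : ℤ) := by exact_mod_cast α.pos
  have hNb : (N : ℤ) ∣ (α.den : ℤ) := by exact_mod_cast hdvd
  have hN0 : (0 : ℤ) < (N : ℤ) := by exact_mod_cast Nat.zero_lt_of_lt hN
  set a : ℤ := α.num with ha
  set b : ℤ := (α.den : ℤ) with hb
  have hb2N : 2 * (N : ℤ) ≤ b := by
    obtain ⟨k, hk⟩ := hNb
    have hk1 : k ≠ 1 := by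
      intro h; apply hden
      have h2 : (α.den : ℤ) = (N : ℤ) := by rw [← hb, hk, h, mul_one]
      exact_mod_cast h2
    have hk0 : 0 < k := by nlinarith
    have hk2 : 2 ≤ k := by omega
    nlinarith
  have gap1 : (n : ℤ) * b + N ≤ a * N := by
    obtain ⟨k, hk⟩ : (N : ℤ) ∣ (a * N - n * b) :=
      dvd_sub (Dvd.intro_left a rfl) (hNb.mul_left n)
    have hk0 : 0 < k := by nlinarith
    nlinarith
  have gap2 : a * N + N ≤ (nxt N n : ℤ) * b := by
    obtain ⟨k, hk⟩ : (N : ℤ) ∣ ((nxt N n : ℤ) * b - a * N) :=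
      dvd_sub (hNb.mul_left _) (Dvd.intro_left a rfl)
    have hk0 : 0 < k := by nlinarith
    nlinarith
  have hbQ : (0 : ℚ) < ((b : ℤ) : ℚ) := by exact_mod_cast hb0
  set q : ℚ := ((a * N + N - b : ℤ) : ℚ) / ((b : ℤ) : ℚ) with hq
  set m : ℤ := max ((n : ℤ) + 1) ⌈q⌉ with hm
  have hceil_le : ⌈q⌉ ≤ (nxt N n : ℤ) - 1 := by
    rw [Int.ceil_le, hq, div_le_iff₀ hbQ]
    have gap2Q : (a : ℚ) * N + N ≤ (nxt N n : ℚ) * ((b : ℤ) : ℚ) := by exact_mod_cast gap2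
    push_cast at gap2Q ⊢
    linarith
  have hnn : (n : ℤ) + 1 ≤ (nxt N n : ℤ) - 1 := by
    have := nxt_ge N n hN hg hgood
    omega
  have hm_lt : m < (nxt N n : ℤ) := by
    rw [hm]
    apply max_lt <;> omega
  have hm_gt : (n : ℤ) < m := lt_of_lt_of_le (by omega) (le_max_left _ _)
  have hlow : a * N + N - b ≤ m * b := by
    have h1 : q ≤ (m : ℚ) := le_trans (Int.le_ceil _) (by exact_mod_cast le_max_right _ _)
    rw [hq, div_le_iff₀ hbQ] at h1
    exact_mod_cast h1
  have hhigh : m * b ≤ a * N + b - N := by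
    have hc1 : (⌈q⌉ - 1) * b ≤ a * N + N - b - 1 := by
      have h1 : ((⌈q⌉ : ℚ) - 1) < q := by
        have := Int.ceil_lt_add_one q; linarith
      have h2 : ((⌈q⌉ : ℚ) - 1) * ((b : ℤ) : ℚ) < ((a * N + N - b : ℤ) : ℚ) :=
        calc ((⌈q⌉ : ℚ) - 1) * ((b : ℤ) : ℚ)
            < (((a * N + N - b : ℤ) : ℚ) / ((b : ℤ) : ℚ)) * ((b : ℤ) : ℚ) :=
              mul_lt_mul_of_pos_right (hq ▸ h1) hbQ
          _ = _ := div_mul_cancel₀ _ (ne_of_gt hbQ)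
      have h3 : ((((⌈q⌉ - 1) * b : ℤ)) : ℚ) < ((a * N + N - b : ℤ) : ℚ) := by
        push_cast at h2 ⊢; linarith
      have h4 : (⌈q⌉ - 1) * b < a * N + N - b := by exact_mod_cast h3
      omega
    have hc2 : ⌈q⌉ * b ≤ a * N + b - N := by nlinarith
    have hc3 : ((n : ℤ) + 1) * b ≤ a * N + b - N := by nlinarith
    rcases le_total ((n : ℤ) + 1) ⌈q⌉ with h | h
    · rw [hm, max_eq_right h]; exact hc2
    · rw [hm, max_eq_left h]; exact hc3
  have hm0 : 0 ≤ m := by omega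
  clear hm hceil_le hnn
  clear_value m
  lift m to ℕ using hm0 with c
  have hc1 : n < c := by exact_mod_cast hm_gt
  have hc2 : c < nxt N n := by exact_mod_cast hm_lt
  obtain ⟨hmem, hdenc⟩ := int_mem N n hN c hc1 hc2
  refine ⟨c, ⟨hc1, hc2⟩, ?_⟩
  unfold disk
  apply Metric.closedBall_subset_closedBall'
  rw [hdenc]
  set β : ℚ := ((c : ℚ) / (N : ℚ)) with hβ
  have hdist : dist (α : ℂ) (β : ℂ) = |(α : ℝ) - (β : ℝ)| := by
    rw [Complex.dist_of_im_eq (by simp)]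
    simp [Real.dist_eq]
  have ha2 : a = α.num := rfl
  have hb2 : b = (α.den : ℤ) := rfl
  have hαR : (α : ℝ) = (a : ℝ) / (b : ℝ) := by
    rw [ha2, hb2, Rat.cast_def]; push_cast; ring
  have hβR : (β : ℝ) = (c : ℝ) / (N : ℝ) := by rw [hβ]; push_cast; ring
  have hbR : (0 : ℝ) < (b : ℝ) := by exact_mod_cast hb0
  have hNR : (0 : ℝ) < (N : ℝ) := by exact_mod_cast hN0
  have e : (α : ℝ) - (β : ℝ) = ((a * N - c * b : ℤ) : ℝ) / ((b : ℝ) * (N : ℝ)) := by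
    rw [hαR, hβR]; field_simp; push_cast; ring
  have hnumZ : |a * N - (c : ℤ) * b| ≤ b - N := abs_le.mpr ⟨by linarith, by linarith⟩
  have hnum : |((a * N - c * b : ℤ) : ℝ)| ≤ (b : ℝ) - (N : ℝ) := by
    rw [← Int.cast_abs]
    exact_mod_cast hnumZ
  have key : |(α : ℝ) - (β : ℝ)| ≤ ((b : ℝ) - N) / ((b : ℝ) * N) := by
    rw [e, abs_div, abs_of_pos (mul_pos hbR hNR)]
    exact (div_le_div_iff_of_pos_right (mul_pos hbR hNR)).mpr hnum
  rw [hdist]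
  have hsum : (1 : ℝ) / (b : ℝ) + ((b : ℝ) - N) / ((b : ℝ) * N) = 1 / (N : ℝ) := by
    field_simp
    ring
  have hbcast : ((α.den : ℕ) : ℝ) = ((b : ℤ) : ℝ) := by rw [hb2]; push_cast; ring
  rw [hbcast]
  linarith [key]

/-- For a good pair `(N,n)` (i.e. `gcd(N,n) > 1` and `gcd(N,n+1) = 1`), the region
`R_{N,n}` is the union of the disks `D_{a/N}` over integers `n < a < n'`.
In particular `c(N,n) = 0`. -/
theorem good_region (N n : ℕ) (hN : 1 < N) (hn : n ≤ N - 1) (hg : 1 < Nat.gcd N n)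
    (hgood : Nat.gcd N (n + 1) = 1) :
    RP N n = (⋃ a ∈ Set.Ioo n (nxt N n), disk ((a : ℚ) / (N : ℚ))) ∧ cP N n = 0 := by
  have hNQ : (0 : ℚ) < (N : ℚ) := by exact_mod_cast Nat.zero_lt_of_lt hN
  have hNZ : (0 : ℤ) < (N : ℤ) := by exact_mod_cast Nat.zero_lt_of_lt hN
  have main : ∀ α ∈ candP N n, α.den ≠ N →
      ∃ c : ℕ, c ∈ Set.Ioo n (nxt N n) ∧ disk α ⊆ disk ((c : ℚ) / (N : ℚ)) :=
    fun α hα h => cover N n hN hg hgood hα h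
  have intcase : ∀ α ∈ candP N n, α.den = N →
      ∃ c : ℕ, c ∈ Set.Ioo n (nxt N n) ∧ α = (c : ℚ) / (N : ℚ) := by
    intro α hα hd
    have hb := strict_bounds N n hN hg hα
    rw [hd] at hb
    have hnum0 : 0 ≤ α.num := by
      have h0 : (0 : ℚ) ≤ α := le_trans (by positivity) hα.1
      exact Rat.num_nonneg.mpr h0
    have ht : (α.num.toNat : ℤ) = α.num := Int.toNat_of_nonneg hnum0
    refine ⟨α.num.toNat, ⟨?_, ?_⟩, ?_⟩
    · have h1 : (n : ℤ) < α.num := lt_of_mul_lt_mul_right hb.1 hNZ.le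
      exact_mod_cast ht ▸ h1
    · have h1 : α.num < (nxt N n : ℤ) := lt_of_mul_lt_mul_left ?_ hNZ.le
      · exact_mod_cast ht ▸ h1
      · calc (N : ℤ) * α.num = α.num * N := mul_comm _ _
          _ < (nxt N n : ℤ) * N := by
            have := hb.2
            linarith [hb.2]
          _ = (N : ℤ) * (nxt N n : ℤ) := mul_comm _ _
    · conv_lhs => rw [← Rat.num_div_den α, hd]
      have h2 : (α.num : ℚ) = (α.num.toNat : ℚ) := by exact_mod_cast ht.symm
      rw [h2]
  constructor
  · ext z
    simp only [RP, Set.mem_iUnion, exists_prop]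
    constructor
    · rintro ⟨α, hα, hz⟩
      by_cases hd : α.den = N
      · obtain ⟨c, hc, rfl⟩ := intcase α hα hd
        exact ⟨c, hc, hz⟩
      · obtain ⟨c, hc, hsub⟩ := main α hα hd
        exact ⟨c, hc, hsub hz⟩
    · rintro ⟨c, hc, hz⟩
      exact ⟨_, (int_mem N n hN c hc.1 hc.2).1, hz⟩
  · have hSP : ∀ α ∈ SP N n, α.den = N := by
      intro α hα
      by_contra hd
      obtain ⟨c, hc, hsub⟩ := main α hα.1 hd
      apply hα.2
      intro z hz
      have hmem := int_mem N n hN c hc.1 hc.2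
      refine Set.mem_biUnion ⟨hmem.1, ?_⟩ (hsub hz)
      simp only [Set.mem_singleton_iff]
      exact fun h => hd (h ▸ hmem.2)
    have himg : poleComplexity (SP N n) '' SP N n ⊆ {0} := by
      rintro x ⟨α, hα, rfl⟩
      have hempty : {β ∈ SP N n | β ≠ α ∧ northPole α ∈ disk β} = ∅ := by
        ext β
        simp only [Set.mem_setOf_eq, Set.mem_empty_iff_false, iff_false, not_and]
        intro hβ hne hpole
        have hαden := hSP α hα
        have hβden := hSP β hβ
        have hnumne : α.num ≠ β.num := by
          intro h
          exact hne (Rat.ext h.symm (hβden.trans hαden.symm))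
        have hNR : (0 : ℝ) < (N : ℝ) := by exact_mod_cast Nat.zero_lt_of_lt hN
        have hsep : 1 / (N : ℝ) ≤ |(α : ℝ) - (β : ℝ)| := by
          have e : (α : ℝ) - (β : ℝ) = ((α.num - β.num : ℤ) : ℝ) / (N : ℝ) := by
            rw [Rat.cast_def, Rat.cast_def, hαden, hβden]; push_cast; ring
          rw [e, abs_div, abs_of_pos hNR]
          apply (div_le_div_iff_of_pos_right hNR).mpr
          have h1 : (1 : ℤ) ≤ |α.num - β.num| := Int.one_le_abs (sub_ne_zero.mpr hnumne)
          rw [← Int.cast_abs]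
          exact_mod_cast h1
        have hre : (northPole α).re = (α : ℝ) := by
          simp [northPole, Complex.div_re]
        have him : (northPole α).im = 1 / (N : ℝ) := by
          simp only [northPole, Complex.add_im, Complex.ratCast_im, Complex.div_im,
            Complex.I_im, Complex.I_re, Complex.natCast_re, Complex.natCast_im,
            Complex.normSq_natCast, hαden]
          field_simp
          ring
        have hdisteq : dist (northPole α) ((β : ℚ) : ℂ) =
            Real.sqrt (((α : ℝ) - (β : ℝ)) ^ 2 + (1 / (N : ℝ)) ^ 2) := by
          rw [Complex.dist_eq_re_im, hre, him]
          simp [Complex.ratCast_re, Complex.ratCast_im]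
        have hgt : 1 / (N : ℝ) < dist (northPole α) ((β : ℚ) : ℂ) := by
          rw [hdisteq, Real.lt_sqrt (by positivity)]
          have hx2 : (1 / (N : ℝ)) ^ 2 ≤ ((α : ℝ) - (β : ℝ)) ^ 2 := by
            rw [← sq_abs ((α : ℝ) - (β : ℝ))]
            exact pow_le_pow_left₀ (by positivity) hsep 2
          have hp : (0 : ℝ) < (1 / (N : ℝ)) ^ 2 := by positivity
          linarith
        rw [disk, hβden, Metric.mem_closedBall] at hpole
        linarith
      simp [poleComplexity, hempty]
    rcases Set.subset_singleton_iff_eq.mp himg with h | h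
    · rw [cP, h]
      exact csSup_empty
    · rw [cP, h]
      exact csSup_singleton 0

end

end Paper
end

section
/- Let (N,n) be a bad pair. Then (N, N−n−1) is also a bad pair, the regions R_{N,n} and R_{N,N−n−1} are mirror images of each other under the reflection z ↦ 1 − conj(z) across the vertical line Re(z) = 1/2, and c(N,n) = c(N,N−n−1). -/
namespace Paper

noncomputable section

/-- Rationals `a/b ∈ [n/N, (n+1)/N]` in lowest terms with `N ∣ b`. -/
def candB (N n : ℕ) : Set ℚ :=
  {α | (n : ℚ) / (N : ℚ) ≤ α ∧ α ≤ ((n : ℚ) + 1) / (N : ℚ) ∧ N ∣ α.den}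

/-- The region `R_{N,n}` for a bad pair `(N,n)`. -/
def RB (N n : ℕ) : Set ℂ := ⋃ α ∈ candB N n, disk α

/-- The set `S_{N,n}` for a bad pair `(N,n)`. -/
def SB (N n : ℕ) : Set ℚ :=
  {α | α ∈ candB N n ∧ ¬ disk α ⊆ ⋃ β ∈ candB N n \ {α}, disk β}

/-- The complexity `c(N,n)` for a bad pair `(N,n)`. -/
def cB (N n : ℕ) : ℕ := sSup (poleComplexity (SB N n) '' SB N n)

/-! ### Auxiliary lemmas -/

lemma den_one_sub (α : ℚ) : (1 - α).den = α.den := by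
  have hcop : IsCoprime (α.num) (α.den : ℤ) :=
    Int.isCoprime_iff_gcd_eq_one.mpr α.reduced
  have hcop2 : IsCoprime ((α.den : ℤ) - α.num) (α.den : ℤ) := by
    have := (hcop.neg_left).add_mul_left_left 1
    simpa [mul_one, neg_add_eq_sub] using this
  have hnat : Nat.Coprime ((α.den : ℤ) - α.num).natAbs ((α.den : ℤ)).natAbs :=
    Int.isCoprime_iff_gcd_eq_one.mp hcop2
  have hd0 : (0:ℤ) < (α.den : ℤ) := by exact_mod_cast α.pos
  have key : ((((α.den : ℤ) - α.num : ℤ) : ℚ) / ((α.den : ℤ) : ℚ)).den = α.den := by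
    have := Rat.den_div_eq_of_coprime hd0 hnat
    exact_mod_cast this
  have heq : (1 - α : ℚ) = (((α.den : ℤ) - α.num : ℤ) : ℚ) / ((α.den : ℤ) : ℚ) := by
    have hd : ((α.den : ℚ)) ≠ 0 := by exact_mod_cast α.den_ne_zero
    push_cast
    rw [sub_div, div_self hd, Rat.num_div_den]
  rw [heq] at *
  exact key

lemma gcd_sub_eq (N k : ℕ) (h : k ≤ N) : Nat.gcd N (N - k) = Nat.gcd N k := by
  refine Nat.dvd_antisymm (Nat.dvd_gcd (Nat.gcd_dvd_left _ _) ?_)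
    (Nat.dvd_gcd (Nat.gcd_dvd_left _ _) ?_)
  · have := Nat.dvd_sub (Nat.gcd_dvd_left N (N - k)) (Nat.gcd_dvd_right N (N - k))
    simpa [Nat.sub_sub_self h] using this
  · exact Nat.dvd_sub (Nat.gcd_dvd_left N k) (Nat.gcd_dvd_right N k)

/-- The reflection `z ↦ 1 - conj z`. -/
def refl (z : ℂ) : ℂ := 1 - (starRingEnd ℂ) z

lemma refl_refl (z : ℂ) : refl (refl z) = z := by
  simp [refl, map_sub]

lemma refl_injective : Function.Injective refl :=
  Function.LeftInverse.injective refl_refl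

lemma refl_dist (z w : ℂ) : dist (refl z) (refl w) = dist z w := by
  rw [refl, refl, dist_sub_left]
  exact Complex.dist_conj_conj z w

lemma refl_image_closedBall (c : ℂ) (ρ : ℝ) :
    refl '' Metric.closedBall c ρ = Metric.closedBall (refl c) ρ := by
  ext w
  constructor
  · rintro ⟨z, hz, rfl⟩
    simpa [Metric.mem_closedBall, refl_dist] using hz
  · intro hw
    refine ⟨refl w, ?_, refl_refl w⟩
    have h2 : dist (refl w) (refl (refl c)) ≤ ρ := by
      rw [refl_dist]; exact Metric.mem_closedBall.mp hw
    simpa [Metric.mem_closedBall, refl_refl] using h2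

lemma refl_ratCast (α : ℚ) : refl ((α : ℂ)) = ((1 - α : ℚ) : ℂ) := by
  rw [refl, map_ratCast]
  push_cast
  ring

lemma disk_one_sub (α : ℚ) : disk (1 - α) = refl '' disk α := by
  rw [disk, disk, refl_image_closedBall, den_one_sub, refl_ratCast]

lemma mem_disk_refl (z : ℂ) (α : ℚ) : refl z ∈ disk (1 - α) ↔ z ∈ disk α := by
  rw [disk_one_sub]
  exact (refl_injective.mem_set_image)

lemma northPole_one_sub (α : ℚ) : northPole (1 - α) = refl (northPole α) := by
  rw [northPole, northPole, den_one_sub, refl, map_add, map_ratCast, map_div₀,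
    Complex.conj_I, map_natCast]
  push_cast
  ring

lemma candB_mem_symm (N n : ℕ) (hN : 1 < N) (hn : n ≤ N - 1) {α : ℚ}
    (h : α ∈ candB N n) : (1 - α) ∈ candB N (N - n - 1) := by
  obtain ⟨h1, h2, h3⟩ := h
  have hN0 : (0:ℚ) < N := by exact_mod_cast (by omega : 0 < N)
  have hle : n + 1 ≤ N := by omega
  have hc : ((N - n - 1 : ℕ) : ℚ) = (N:ℚ) - (n:ℚ) - 1 := by
    have e : N - n - 1 = N - (n + 1) := by omega
    rw [e, Nat.cast_sub hle]
    push_cast; ring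
  rw [div_le_iff₀ hN0] at h1
  rw [le_div_iff₀ hN0] at h2
  refine ⟨?_, ?_, by rw [den_one_sub]; exact h3⟩
  · rw [hc, div_le_iff₀ hN0]
    nlinarith
  · rw [hc, le_div_iff₀ hN0]
    nlinarith

lemma candB_image (N n : ℕ) (hN : 1 < N) (hn : n ≤ N - 1) :
    candB N (N - n - 1) = (fun α : ℚ => 1 - α) '' candB N n := by
  ext β
  constructor
  · intro hb
    have hn' : N - n - 1 ≤ N - 1 := by omega
    have := candB_mem_symm N (N - n - 1) hN hn' hb
    have e : N - (N - n - 1) - 1 = n := by omega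
    rw [e] at this
    exact ⟨1 - β, this, by ring⟩
  · rintro ⟨α, hα, rfl⟩
    exact candB_mem_symm N n hN hn hα

lemma biUnion_disk_image (s : Set ℚ) :
    ⋃ β ∈ (fun α : ℚ => 1 - α) '' s, disk β = refl '' ⋃ α ∈ s, disk α := by
  rw [Set.biUnion_image, Set.image_iUnion₂]
  exact Set.iUnion₂_congr fun α _ => disk_one_sub α

lemma SB_mem_symm (N n : ℕ) (hN : 1 < N) (hn : n ≤ N - 1) {α : ℚ}
    (h : α ∈ SB N n) : (1 - α) ∈ SB N (N - n - 1) := by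
  obtain ⟨hc, hns⟩ := h
  refine ⟨candB_mem_symm N n hN hn hc, fun hsub => hns ?_⟩
  have hdiff : candB N (N - n - 1) \ {1 - α} = (fun γ : ℚ => 1 - γ) '' (candB N n \ {α}) := by
    rw [candB_image N n hN hn, ← Set.image_singleton,
      Set.image_diff (fun x y hxy => by linarith [sub_right_injective hxy] : Function.Injective (fun γ : ℚ => 1 - γ))]
  rw [hdiff, biUnion_disk_image, disk_one_sub] at hsub
  exact (Set.image_subset_image_iff refl_injective).mp hsub

lemma SB_image (N n : ℕ) (hN : 1 < N) (hn : n ≤ N - 1) :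
    SB N (N - n - 1) = (fun α : ℚ => 1 - α) '' SB N n := by
  ext β
  constructor
  · intro hb
    have hn' : N - n - 1 ≤ N - 1 := by omega
    have := SB_mem_symm N (N - n - 1) hN hn' hb
    have e : N - (N - n - 1) - 1 = n := by omega
    rw [e] at this
    exact ⟨1 - β, this, by ring⟩
  · rintro ⟨α, hα, rfl⟩
    exact SB_mem_symm N n hN hn hα

lemma one_sub_injective : Function.Injective (fun α : ℚ => 1 - α) :=
  fun x y hxy => by simpa using sub_right_injective hxy

lemma pc_symm (s : Set ℚ) (α : ℚ) :
    poleComplexity ((fun α : ℚ => 1 - α) '' s) (1 - α) = poleComplexity s α := by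
  rw [poleComplexity, poleComplexity]
  have : {β ∈ (fun α : ℚ => 1 - α) '' s | β ≠ 1 - α ∧ northPole (1 - α) ∈ disk β}
      = (fun α : ℚ => 1 - α) '' {β ∈ s | β ≠ α ∧ northPole α ∈ disk β} := by
    ext β
    constructor
    · rintro ⟨⟨γ, hγ, rfl⟩, hne, hmem⟩
      refine ⟨γ, ⟨hγ, fun he => hne (by rw [he]), ?_⟩, rfl⟩
      rwa [northPole_one_sub, mem_disk_refl] at hmem
    · rintro ⟨γ, ⟨hγ, hne, hmem⟩, rfl⟩
      refine ⟨⟨γ, hγ, rfl⟩, fun he => hne (one_sub_injective he), ?_⟩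
      rwa [northPole_one_sub, mem_disk_refl]
  rw [this, Set.ncard_image_of_injective _ one_sub_injective]

/-- For a bad pair `(N,n)`, the pair `(N, N-n-1)` is also bad, the regions
`R_{N,n}` and `R_{N,N-n-1}` are mirror images under `z ↦ 1 - conj z`, and
`c(N,n) = c(N,N-n-1)`. -/
theorem symmetric_bad_pair (N n : ℕ) (hN : 1 < N) (hn : n ≤ N - 1)
    (hg : 1 < Nat.gcd N n) (hbad : 1 < Nat.gcd N (n + 1)) :
    (N - n - 1 ≤ N - 1 ∧ 1 < Nat.gcd N (N - n - 1) ∧ 1 < Nat.gcd N (N - n - 1 + 1)) ∧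
    RB N (N - n - 1) = (fun z : ℂ => 1 - (starRingEnd ℂ) z) '' RB N n ∧
    cB N n = cB N (N - n - 1) := by
  have hle1 : n + 1 ≤ N := by omega
  refine ⟨⟨by omega, ?_, ?_⟩, ?_, ?_⟩
  · have e : N - n - 1 = N - (n + 1) := by omega
    rw [e, gcd_sub_eq N (n + 1) hle1]
    exact hbad
  · have e : N - n - 1 + 1 = N - n := by omega
    rw [e, gcd_sub_eq N n (by omega)]
    exact hg
  · rw [RB, RB, candB_image N n hN hn, biUnion_disk_image]
    rfl
  · rw [cB, cB, SB_image N n hN hn, Set.image_image]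
    congr 1
    exact (Set.image_congr fun α _ => pc_symm (SB N n) α).symm

end

end Paper
end

section
/- Let (N,n) be a bad pair and suppose gcd(N, 2n+1) = 1. Then R_{N,n} = D((2n+1)/(2N), 1/(2N)), the closed disk of radius 1/(2N) centered at (2n+1)/(2N). In particular, c(N,n) = 0. -/
namespace Paper

noncomputable section

lemma subset_mid (N n : ℕ) (hN : 1 < N)
    (hg : 1 < Nat.gcd N n) (hbad : 1 < Nat.gcd N (n + 1))
    (α : ℚ) (hα : α ∈ candB N n) :
    disk α ⊆ diskAt (2 * n + 1) (2 * N) := by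
  obtain ⟨h1, h2, ⟨t, ht⟩⟩ := hα
  have hdenpos : 0 < α.den := α.pos
  have ht0 : 0 < t := by
    rcases Nat.eq_zero_or_pos t with h | h
    · rw [h, mul_zero] at ht; omega
    · exact h
  have hNQ : (0:ℚ) < (N:ℚ) := by exact_mod_cast (by omega : 0 < N)
  have hbQ : (0:ℚ) < ((α.den : ℕ) : ℚ) := by exact_mod_cast hdenpos
  set a : ℤ := α.num with ha
  have αeq : α = (a : ℚ) / (α.den : ℚ) := (Rat.num_div_den α).symm
  -- integer inequalities
  have hNZ : (0:ℤ) < (N:ℤ) := by exact_mod_cast (by omega : 0 < N)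
  have key1 : (n:ℤ) * t ≤ a := by
    rw [αeq, div_le_div_iff₀ hNQ hbQ] at h1
    have h1' : (n:ℤ) * α.den ≤ a * N := by exact_mod_cast h1
    rw [ht] at h1'
    have h' : ((n:ℤ) * t) * N ≤ a * N := by
      calc ((n:ℤ) * t) * N = (n:ℤ) * ((N:ℤ) * t) := by ring
        _ ≤ a * N := by exact_mod_cast h1'
    exact le_of_mul_le_mul_right h' hNZ
  have key2 : a ≤ ((n:ℤ) + 1) * t := by
    rw [αeq, div_le_div_iff₀ hbQ hNQ] at h2
    have h2' : a * N ≤ ((n:ℚ) + 1) * α.den := by exact_mod_cast h2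
    rw [ht] at h2'
    have h2'' : a * N ≤ ((n:ℤ) + 1) * ((N:ℤ) * t) := by exact_mod_cast h2'
    have h' : a * N ≤ (((n:ℤ) + 1) * t) * N := by
      calc a * N ≤ ((n:ℤ) + 1) * ((N:ℤ) * t) := h2''
        _ = (((n:ℤ) + 1) * t) * N := by ring
    exact le_of_mul_le_mul_right h' hNZ
  -- strictness via gcd conditions
  have hne1 : a ≠ (n:ℤ) * t := by
    intro hEq
    set d := Nat.gcd N n with hd
    have hdvd1 : d ∣ a.natAbs := by
      rw [hEq]
      have : ((n:ℤ) * t).natAbs = n * t := by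
        simp [Int.natAbs_mul]
      rw [this]
      exact Dvd.dvd.mul_right (Nat.gcd_dvd_right N n) t
    have hdvd2 : d ∣ α.den := by
      rw [ht]; exact Dvd.dvd.mul_right (Nat.gcd_dvd_left N n) t
    have := Nat.dvd_gcd hdvd1 hdvd2
    rw [α.reduced] at this
    have := Nat.dvd_one.mp this
    omega
  have hne2 : a ≠ ((n:ℤ) + 1) * t := by
    intro hEq
    set d := Nat.gcd N (n + 1) with hd
    have hdvd1 : d ∣ a.natAbs := by
      rw [hEq]
      have : (((n:ℤ) + 1) * t).natAbs = (n + 1) * t := by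
        have : ((n:ℤ) + 1) * t = (((n+1) * t : ℕ) : ℤ) := by push_cast; ring
        rw [this, Int.natAbs_natCast]
      rw [this]
      exact Dvd.dvd.mul_right (Nat.gcd_dvd_right N (n+1)) t
    have hdvd2 : d ∣ α.den := by
      rw [ht]; exact Dvd.dvd.mul_right (Nat.gcd_dvd_left N (n+1)) t
    have := Nat.dvd_gcd hdvd1 hdvd2
    rw [α.reduced] at this
    have := Nat.dvd_one.mp this
    omega
  have hlt1 : (n:ℤ) * t < a := lt_of_le_of_ne key1 (Ne.symm hne1)
  have hlt2 : a < ((n:ℤ) + 1) * t := lt_of_le_of_ne key2 hne2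
  -- the key integer bound
  set u : ℤ := 2 * a - (2 * (n:ℤ) + 1) * t with hu
  have hubound : 2 - (t:ℤ) ≤ u ∧ u ≤ (t:ℤ) - 2 := by
    have e1 : ((n:ℤ) + 1) * t = (n:ℤ) * t + t := by ring
    have e2 : u = 2 * a - 2 * ((n:ℤ) * t) - t := by rw [hu]; ring
    constructor <;> omega
  have ht2 : 2 ≤ t := by
    have := hubound.1; have := hubound.2; omega
  -- real geometry
  unfold disk diskAt
  apply Metric.closedBall_subset_closedBall'
  have hNR : (0:ℝ) < (N:ℝ) := by exact_mod_cast (by omega : 0 < N)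
  have htR : (0:ℝ) < (t:ℝ) := by exact_mod_cast ht0
  have hcenter : ((((2*n+1 : ℕ)) : ℂ)) / (((2*N : ℕ)) : ℂ)
      = Complex.ofReal ((2*(n:ℝ)+1) / (2*(N:ℝ))) := by
    push_cast; ring
  have hdist : dist (α : ℂ) ((((2*n+1 : ℕ)) : ℂ) / (((2*N : ℕ)) : ℂ))
      = |(α:ℝ) - (2*(n:ℝ)+1) / (2*(N:ℝ))| := by
    rw [hcenter, Complex.dist_eq]
    have : (α : ℂ) - Complex.ofReal ((2*(n:ℝ)+1) / (2*(N:ℝ)))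
        = Complex.ofReal ((α:ℝ) - (2*(n:ℝ)+1) / (2*(N:ℝ))) := by
      push_cast; ring
    rw [this, Complex.norm_real, Real.norm_eq_abs]
  rw [hdist]
  have hαr : (α:ℝ) = (a:ℝ) / ((N:ℝ) * (t:ℝ)) := by
    rw [Rat.cast_def, ht]; push_cast; ring
  have hstep : (α:ℝ) - (2*(n:ℝ)+1) / (2*(N:ℝ)) = (u:ℝ) / (2 * (N:ℝ) * (t:ℝ)) := by
    rw [hαr, hu]
    field_simp
    push_cast
    ring
  have h2Nt : (0:ℝ) < 2 * (N:ℝ) * (t:ℝ) := by positivity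
  rw [hstep, abs_div, abs_of_pos h2Nt]
  have huR : |(u:ℝ)| ≤ (t:ℝ) - 2 := by
    rw [abs_le]
    constructor
    · have h' : -((t:ℤ) - 2) ≤ u := by linarith [hubound.1]
      exact_mod_cast h'
    · exact_mod_cast hubound.2
  have hdenr : ((α.den : ℕ) : ℝ) = (N:ℝ) * (t:ℝ) := by rw [ht]; push_cast; ring
  rw [hdenr]
  have hNt : (0:ℝ) < (N:ℝ) * (t:ℝ) := by positivity
  have e3 : ((2*N : ℕ) : ℝ) = 2 * (N:ℝ) := by push_cast; ring
  rw [e3]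
  calc 1 / ((N:ℝ) * (t:ℝ)) + |(u:ℝ)| / (2 * (N:ℝ) * (t:ℝ))
      = (2 + |(u:ℝ)|) / (2 * (N:ℝ) * (t:ℝ)) := by field_simp
    _ ≤ (t:ℝ) / (2 * (N:ℝ) * (t:ℝ)) := by
        gcongr
        linarith [huR]
    _ = 1 / (2 * (N:ℝ)) := by
        rw [div_eq_div_iff h2Nt.ne' (by positivity : (0:ℝ) < 2 * (N:ℝ)).ne']; ring

/-- For a bad pair `(N,n)` with `gcd(N, 2n+1) = 1`, the region `R_{N,n}` is the
single disk of radius `1/(2N)` centered at `(2n+1)/(2N)`. In particular `c(N,n) = 0`. -/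
theorem bad_region_midpoint (N n : ℕ) (hN : 1 < N) (hn : n ≤ N - 1)
    (hg : 1 < Nat.gcd N n) (hbad : 1 < Nat.gcd N (n + 1))
    (hmid : Nat.gcd N (2 * n + 1) = 1) :
    RB N n = diskAt (2 * n + 1) (2 * N) ∧ cB N n = 0 := by
  set μ : ℚ := ((2*n+1 : ℕ) : ℚ) / ((2*N : ℕ) : ℚ) with hμ
  have hco : Nat.Coprime (2*n+1) (2*N) := by
    have h2 : Nat.Coprime (2*n+1) 2 := by
      simp [Nat.coprime_two_right, Nat.odd_iff]
    have hN' : Nat.Coprime (2*n+1) N := Nat.coprime_comm.mp hmid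
    exact Nat.Coprime.mul_right h2 hN'
  have hb0 : (0:ℤ) < ((2*N : ℕ) : ℤ) := by exact_mod_cast (by omega : 0 < 2*N)
  have hden : μ.den = 2*N := by
    have h := Rat.den_div_eq_of_coprime (a := ((2*n+1 : ℕ) : ℤ)) (b := ((2*N : ℕ) : ℤ))
      hb0 (by simpa only [Int.natAbs_natCast] using hco)
    have hμ' : μ = ((((2*n+1 : ℕ) : ℤ)) : ℚ) / ((((2*N : ℕ) : ℤ)) : ℚ) := by
      rw [hμ]; push_cast; ring
    rw [hμ'] at *
    exact_mod_cast h
  have hNQ : (0:ℚ) < (N:ℚ) := by exact_mod_cast (by omega : 0 < N)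
  have h2NQ : (0:ℚ) < ((2*N : ℕ) : ℚ) := by exact_mod_cast (by omega : 0 < 2*N)
  have hμmem : μ ∈ candB N n := by
    refine ⟨?_, ?_, ?_⟩
    · rw [hμ, div_le_div_iff₀ hNQ h2NQ]
      push_cast
      nlinarith [hNQ]
    · rw [hμ, div_le_div_iff₀ h2NQ hNQ]
      push_cast
      nlinarith [hNQ]
    · rw [hden]; exact ⟨2, by ring⟩
  have hμC : (μ : ℂ) = (((2*n+1 : ℕ)) : ℂ) / (((2*N : ℕ)) : ℂ) := by
    rw [hμ]; push_cast; ring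
  have hdisk : disk μ = diskAt (2*n+1) (2*N) := by
    unfold disk diskAt
    rw [hden, hμC]
  constructor
  · apply Set.Subset.antisymm
    · exact Set.iUnion₂_subset fun α hα => subset_mid N n hN hg hbad α hα
    · rw [← hdisk]
      exact Set.subset_biUnion_of_mem hμmem
  · have hSB : SB N n ⊆ {μ} := by
      intro α hα
      by_contra hne
      simp only [Set.mem_singleton_iff] at hne
      apply hα.2
      refine (subset_mid N n hN hg hbad α hα.1).trans ?_
      rw [← hdisk]
      exact Set.subset_biUnion_of_mem ⟨hμmem, by simpa using (Ne.symm hne)⟩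
    rcases Set.subset_singleton_iff_eq.mp hSB with h | h
    · rw [cB, h]; simp
    · rw [cB, h, Set.image_singleton]
      have hpc : poleComplexity {μ} μ = 0 := by
        unfold poleComplexity
        have : {β ∈ ({μ} : Set ℚ) | β ≠ μ ∧ northPole μ ∈ disk β} = ∅ := by
          ext β; simp (config := {contextual := true})
        rw [this, Set.ncard_empty]
      rw [hpc]
      exact csSup_singleton 0

end

end Paper
end

section
/- Let N>1 be an integer. If for every integer n with 0 ≤ n ≤ N−1 at least one of n, n+1, 2n+1 is coprime to N, then c(N) = 0. In particular, if N has at most two distinct prime factors (ω(N) ≤ 2), then c(N) = 0. -/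
namespace Paper

noncomputable section

/-! ### Auxiliary lemmas -/

lemma dist_ratCast_complex (p q : ℚ) : dist (p:ℂ) (q:ℂ) = |(p:ℝ) - (q:ℝ)| := by
  rw [Complex.dist_eq, ← Complex.ofReal_ratCast p, ← Complex.ofReal_ratCast q,
    ← Complex.ofReal_sub, Complex.norm_real, Real.norm_eq_abs]

/-- If a disk of some other candidate contains `disk α`, then `α ∉ SSet N`. -/
lemma cover_contra (N : ℕ) {α : ℚ} (hα : α ∈ SSet N) (γ : ℚ)
    (hγc : γ ∈ cand N) (hγne : γ ≠ α)
    (hcov : 1/(α.den:ℝ) + dist (α:ℂ) (γ:ℂ) ≤ 1/(γ.den:ℝ)) : False := by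
  apply hα.2
  intro z hz
  exact Set.mem_biUnion (show γ ∈ cand N \ {α} from ⟨hγc, by simp [hγne]⟩)
    (Metric.closedBall_subset_closedBall' hcov hz)

lemma pole_sq_ineq {α β : ℚ} (h : northPole α ∈ disk β) :
    ((α:ℝ) - (β:ℝ))^2 + (1/(α.den:ℝ))^2 ≤ (1/(β.den:ℝ))^2 := by
  have h2 : dist (northPole α) ((β:ℚ):ℂ) ≤ 1/(β.den:ℝ) := Metric.mem_closedBall.mp h
  have h3 := pow_le_pow_left₀ dist_nonneg h2 2
  rw [Complex.dist_eq, Complex.sq_norm] at h3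
  have h4 : northPole α - (β : ℂ)
      = (((α : ℝ) - (β : ℝ) : ℝ) : ℂ) + ((1 / (α.den : ℝ) : ℝ) : ℂ) * Complex.I := by
    have hden : ((α.den:ℝ)) ≠ 0 := Nat.cast_ne_zero.mpr α.den_nz
    unfold northPole; push_cast; field_simp; ring
  rwa [h4, Complex.normSq_add_mul_I] at h3

set_option maxHeartbeats 2000000 in
/-- The key step: two members of `SSet N` cannot see each other's north pole. -/
lemma key (N : ℕ) (hN : 1 < N)
    (H : ∀ n, n ≤ N - 1 →
      Nat.gcd N n = 1 ∨ Nat.gcd N (n + 1) = 1 ∨ Nat.gcd N (2 * n + 1) = 1)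
    {α β : ℚ} (hα : α ∈ SSet N) (hβ : β ∈ SSet N) (hne : β ≠ α)
    (hpole : northPole α ∈ disk β) : False := by
  obtain ⟨hα0, hα1, hNb⟩ := hα.1
  obtain ⟨hβ0, hβ1, hNd⟩ := hβ.1
  set b : ℕ := α.den with hbdef
  set d : ℕ := β.den with hddef
  have hb0 : 0 < b := α.pos
  have hd0 : 0 < d := β.pos
  have hbR : (0:ℝ) < (b:ℝ) := by exact_mod_cast hb0
  have hdR : (0:ℝ) < (d:ℝ) := by exact_mod_cast hd0
  have hαr : (α:ℝ) = (α.num:ℝ)/(b:ℝ) := by rw [Rat.cast_def]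
  have hβr : (β:ℝ) = (β.num:ℝ)/(d:ℝ) := by rw [Rat.cast_def]
  -- the integer inequality K^2 + d^2 ≤ b^2
  set K : ℤ := α.num * d - b * β.num with hKdef
  have hreal : ((K:ℝ))^2 + (d:ℝ)^2 ≤ (b:ℝ)^2 := by
    have h1 := pole_sq_ineq hpole
    rw [hαr, hβr] at h1
    have e1 : ((α.num:ℝ)/b - (β.num:ℝ)/d) * ((b:ℝ)*d) = (K:ℝ) := by
      push_cast [hKdef]; field_simp
    have e2 : (1/(b:ℝ)) * ((b:ℝ)*d) = (d:ℝ) := by field_simp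
    have e3 : (1/(d:ℝ)) * ((b:ℝ)*d) = (b:ℝ) := by field_simp
    have h3 := mul_le_mul_of_nonneg_right h1 (by positivity : (0:ℝ) ≤ ((b:ℝ)*d)^2)
    calc ((K:ℝ))^2 + (d:ℝ)^2
        = (((α.num:ℝ)/b - (β.num:ℝ)/d)^2 + (1/(b:ℝ))^2) * ((b:ℝ)*d)^2 := by
          rw [add_mul, ← mul_pow, ← mul_pow, e1, e2]
      _ ≤ (1/(d:ℝ))^2 * ((b:ℝ)*d)^2 := h3
      _ = (b:ℝ)^2 := by rw [← mul_pow, e3]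
  have hint : K^2 + (d:ℤ)^2 ≤ (b:ℤ)^2 := by exact_mod_cast hreal
  have hK0 : K ≠ 0 := by
    intro h0
    apply hne
    have : (β:ℝ) = (α:ℝ) := by
      rw [hαr, hβr, div_eq_div_iff hdR.ne' hbR.ne']
      have : (α.num:ℝ) * d - b * β.num = 0 := by exact_mod_cast congrArg (Int.cast : ℤ → ℝ) h0
      linarith
    exact_mod_cast this
  have hNK : (N:ℤ) ∣ K := by
    apply dvd_sub
    · exact Dvd.dvd.mul_left (Int.natCast_dvd_natCast.mpr hNd) _
    · exact Dvd.dvd.mul_right (Int.natCast_dvd_natCast.mpr hNb) _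
  have hNKabs : (N:ℤ) ≤ |K| := Int.le_of_dvd (abs_pos.mpr hK0) ((dvd_abs _ _).mpr hNK)
  have hK2 : (N:ℤ)^2 ≤ K^2 := by
    have h := pow_le_pow_left₀ (by positivity) hNKabs 2
    rwa [sq_abs] at h
  have hNd' : (N:ℤ) ≤ (d:ℤ) := by exact_mod_cast Nat.le_of_dvd hd0 hNd
  have hNpos : 0 < N := by omega
  -- b ≥ 2N
  have hb2N : 2*N ≤ b := by
    obtain ⟨m, hm⟩ := hNb
    have hm1 : 1 ≤ m := by
      rcases Nat.eq_zero_or_pos m with h | h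
      · exfalso; rw [h, mul_zero] at hm; omega
      · exact h
    rcases Nat.lt_or_ge m 2 with h | h
    · exfalso
      have hmm : m = 1 := by omega
      have hbN : b = N := by rw [hm, hmm, mul_one]
      have : (b:ℤ) = (N:ℤ) := by exact_mod_cast hbN
      nlinarith [hK2, hNd', hint, (show (0:ℤ) < (N:ℤ) by exact_mod_cast hNpos)]
    · calc 2*N = N*2 := by ring
        _ ≤ N*m := Nat.mul_le_mul_left N h
        _ = b := hm.symm
  by_cases hb2 : b = 2*N
  · -- case b = 2N : the disk of β itself contains the disk of α
    have hbI : (b:ℤ) = 2*(N:ℤ) := by exact_mod_cast hb2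
    have hdN : d = N := by
      have h1 : (d:ℤ)^2 ≤ 3*(N:ℤ)^2 := by nlinarith [hint, hK2]
      have h2 : (d:ℤ) < 2*(N:ℤ) := by nlinarith [hNd']
      have hd2N : d < 2*N := by exact_mod_cast h2
      obtain ⟨m, hm⟩ := hNd
      have hm1 : 1 ≤ m := by
        rcases Nat.eq_zero_or_pos m with h | h
        · exfalso; rw [h, mul_zero] at hm; omega
        · exact h
      have hmlt : N*m < N*2 := by rw [← hm]; omega
      have : m = 1 := by have := Nat.lt_of_mul_lt_mul_left hmlt; omega
      rw [hm, this, mul_one]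
    have hdI : (d:ℤ) = (N:ℤ) := by exact_mod_cast hdN
    have hKsq : K^2 = (N:ℤ)^2 := by
      have h1 : K^2 ≤ 3*(N:ℤ)^2 := by nlinarith [hint, hNd']
      obtain ⟨M, hM⟩ := hNK
      have h1' : ((N:ℤ)*M)^2 ≤ 3*(N:ℤ)^2 := by rw [← hM]; exact h1
      have hNneq0 : (0:ℤ) < (N:ℤ) := by exact_mod_cast hNpos
      have hNz2 : (0:ℤ) < (N:ℤ)^2 := by
        have h9 : (0:ℤ) < (N:ℤ) := by exact_mod_cast hNpos
        positivity
      have h1'' : (N:ℤ)^2 * M^2 ≤ (N:ℤ)^2 * 3 := by nlinarith [h1']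
      have hM2 : M^2 ≤ 3 := by nlinarith [h1'', hNz2]
      have hM0 : M ≠ 0 := by rintro rfl; simp at hM; exact hK0 hM
      have hMb1 : M < 2 := by nlinarith [sq_nonneg (M-2), hM2]
      have hMb2 : -2 < M := by nlinarith [sq_nonneg (M+2), hM2]
      have hM1 : M = 1 ∨ M = -1 := by omega
      rcases hM1 with h | h <;> rw [hM, h] <;> ring
    have hKabs : |(K:ℝ)| = (N:ℝ) := by
      have : ((K:ℝ))^2 = ((N:ℝ))^2 := by exact_mod_cast hKsq
      have h2 : ((K:ℝ) - N)*((K:ℝ) + N) = 0 := by linear_combination this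
      rcases mul_eq_zero.mp h2 with h | h
      · rw [abs_of_nonneg (by linarith [show (0:ℝ) < (N:ℝ) by exact_mod_cast hNpos] : (0:ℝ) ≤ (K:ℝ))]
        linarith
      · rw [abs_of_nonpos (by linarith [show (0:ℝ) < (N:ℝ) by exact_mod_cast hNpos] : (K:ℝ) ≤ 0)]
        linarith
    refine cover_contra N hα β hβ.1 hne ?_
    rw [dist_ratCast_complex]
    have hsub : (α:ℝ) - (β:ℝ) = (K:ℝ)/((b:ℝ)*d) := by
      rw [hαr, hβr]; push_cast [hKdef]; field_simp
    rw [hsub, abs_div, hKabs, abs_of_pos (by positivity)]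
    have hbR2 : (b:ℝ) = 2*(N:ℝ) := by exact_mod_cast hb2
    have hdR2 : (d:ℝ) = (N:ℝ) := by exact_mod_cast hdN
    rw [hbR2, hdR2]
    have hNR : (0:ℝ) < (N:ℝ) := by exact_mod_cast hNpos
    rw [div_add_div _ _ (by positivity) (by positivity), div_le_div_iff₀ (by positivity) (by positivity)]
    ring_nf
    nlinarith [hNR]
  · -- case b > 2N : a disk with denominator N or 2N contains the disk of α
    have hb3N : 2*N < b := lt_of_le_of_ne hb2N (Ne.symm hb2)
    -- pass to natural numerator
    have hαpos : 0 < α := by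
      rcases lt_or_eq_of_le hα0 with h | h
      · exact h
      · exfalso
        have h1 : α.den = 1 := by rw [← h]; rfl
        have hb1 : b = 1 := by rw [hbdef, h1]
        omega
    have hα1' : α < 1 := by
      rcases lt_or_eq_of_le hα1 with h | h
      · exact h
      · exfalso
        have h1 : α.den = 1 := by rw [h]; rfl
        have hb1 : b = 1 := by rw [hbdef, h1]
        omega
    set a : ℕ := α.num.toNat with hadef
    have haZ : (a:ℤ) = α.num := Int.toNat_of_nonneg (Rat.num_nonneg.mpr hα0)
    have ha1 : 1 ≤ a := by
      have : 0 < α.num := Rat.num_pos.mpr hαpos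
      omega
    have hab : a < b := by
      have := Rat.lt_one_iff_num_lt_denom.mpr hα1'
      omega
    have hcop : Nat.Coprime a b := by
      have h1 : α.num.natAbs = a := by
        have := Int.natAbs_of_nonneg (Rat.num_nonneg.mpr hα0)
        omega
      have h2 := α.reduced
      rwa [h1] at h2
    set n : ℕ := (a*N)/b with hndef
    set φ : ℕ := (a*N) % b with hφdef
    have hmod : b * n + φ = a * N := Nat.div_add_mod (a*N) b
    have hφb : φ < b := Nat.mod_lt _ hb0
    have hNφ : N ∣ φ := by
      rw [hφdef]
      exact (Nat.dvd_mod_iff hNb).mpr ⟨a, mul_comm a N⟩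
    have hφ0 : φ ≠ 0 := by
      intro h0
      have hdvd : b ∣ a * N := Nat.dvd_of_mod_eq_zero (hφdef ▸ h0)
      have : b ∣ N := (Nat.Coprime.dvd_of_dvd_mul_left (Nat.coprime_comm.mp hcop)) hdvd
      have := Nat.le_of_dvd hNpos this
      omega
    have hNleφ : N ≤ φ := Nat.le_of_dvd (by omega) hNφ
    have hφleb : φ ≤ b - N := by
      have hd1 : N ∣ b - φ := Nat.dvd_sub hNb hNφ
      have : N ≤ b - φ := Nat.le_of_dvd (by omega) hd1
      omega
    have hnN : n < N := by
      rw [hndef]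
      apply Nat.div_lt_iff_lt_mul hb0 |>.mpr
      calc a * N < b * N := by exact (Nat.mul_lt_mul_right hNpos).mpr hab
        _ = N * b := by ring
    -- real versions
    have hφR : (b:ℝ) * n + φ = a * N := by exact_mod_cast congrArg (Nat.cast : ℕ → ℝ) hmod
    have hNR : (0:ℝ) < (N:ℝ) := by exact_mod_cast hNpos
    have hαr' : (α:ℝ) = (a:ℝ)/(b:ℝ) := by rw [hαr, ← haZ]; push_cast; ring
    have hNleφR : (N:ℝ) ≤ (φ:ℝ) := by exact_mod_cast hNleφ
    have hφlebR : (φ:ℝ) ≤ (b:ℝ) - N := by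
      have h1 : φ + N ≤ b := by omega
      have : (φ:ℝ) + N ≤ (b:ℝ) := by exact_mod_cast h1
      linarith
    rcases H n (by omega) with hg | hg | hg
    · -- γ = n/N
      have hcg : Nat.Coprime ((n:ℤ)).natAbs N := by
        simpa using Nat.coprime_comm.mp hg
      set γ : ℚ := ⟨(n:ℤ), N, by omega, hcg⟩ with hγdef
      have hγden : γ.den = N := rfl
      have hγnum : γ.num = (n:ℤ) := rfl
      have hγr : (γ:ℝ) = (n:ℝ)/(N:ℝ) := by
        rw [Rat.cast_def, hγden, hγnum]; push_cast; ring
      refine cover_contra N hα γ ⟨?_, ?_, ?_⟩ ?_ ?_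
      · rw [← Rat.num_nonneg, hγnum]; positivity
      · have : (γ:ℝ) ≤ 1 := by rw [hγr]; rw [div_le_one hNR]; exact_mod_cast hnN.le
        exact_mod_cast this
      · rw [hγden]
      · intro h
        have := congrArg Rat.den h
        rw [hγden, ← hbdef] at this
        omega
      · rw [dist_ratCast_complex, hγden, ← hbdef]
        have hφR' : (φ:ℝ) = (a:ℝ)*N - (b:ℝ)*n := by linarith [hφR]
        have hsub : (α:ℝ) - (γ:ℝ) = (φ:ℝ)/((b:ℝ)*N) := by
          rw [hαr', hγr, hφR']; field_simp
        rw [hsub, abs_of_nonneg (by positivity)]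
        rw [div_add_div _ _ (by positivity) (by positivity),
          div_le_div_iff₀ (by positivity) (by positivity)]
        nlinarith [hφlebR, hNleφR, hbR, hNR, mul_pos hbR hNR]
    · -- γ = (n+1)/N
      have hcg : Nat.Coprime (((n:ℤ)+1)).natAbs N := by
        have : (((n:ℤ)+1)).natAbs = n+1 := by
          have h9 : ((n:ℤ)+1) = ((n+1:ℕ):ℤ) := by push_cast; ring
          rw [h9, Int.natAbs_natCast]
        rw [this]; exact Nat.coprime_comm.mp hg
      set γ : ℚ := ⟨(n:ℤ)+1, N, by omega, hcg⟩ with hγdef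
      have hγden : γ.den = N := rfl
      have hγnum : γ.num = (n:ℤ)+1 := rfl
      have hn1N : n + 1 ≤ N := hnN
      have hγr : (γ:ℝ) = ((n:ℝ)+1)/(N:ℝ) := by
        rw [Rat.cast_def, hγden, hγnum]; push_cast; ring
      refine cover_contra N hα γ ⟨?_, ?_, ?_⟩ ?_ ?_
      · rw [← Rat.num_nonneg, hγnum]; positivity
      · have : (γ:ℝ) ≤ 1 := by
          rw [hγr]; rw [div_le_one hNR]
          have : ((n:ℝ))+1 ≤ (N:ℝ) := by exact_mod_cast hn1N
          linarith
        exact_mod_cast this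
      · rw [hγden]
      · intro h
        have := congrArg Rat.den h
        rw [hγden, ← hbdef] at this
        omega
      · rw [dist_ratCast_complex, hγden, ← hbdef]
        have hφR' : (φ:ℝ) = (a:ℝ)*N - (b:ℝ)*n := by linarith [hφR]
        have hsub : (α:ℝ) - (γ:ℝ) = ((φ:ℝ) - b)/((b:ℝ)*N) := by
          rw [hαr', hγr, hφR']; field_simp; ring
        have habs : |(α:ℝ) - (γ:ℝ)| = ((b:ℝ) - φ)/((b:ℝ)*N) := by
          rw [hsub, abs_div, abs_of_pos (by positivity : (0:ℝ) < (b:ℝ)*N),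
            abs_of_nonpos (by linarith [hφb] : (φ:ℝ) - b ≤ 0)]
          ring_nf
        rw [habs]
        rw [div_add_div _ _ (by positivity) (by positivity),
          div_le_div_iff₀ (by positivity) (by positivity)]
        nlinarith [hφlebR, hNleφR, hbR, hNR, mul_pos hbR hNR]
    · -- γ = (2n+1)/(2N)
      have hodd : Nat.Coprime (2*n+1) 2 := by
        have h2 : ¬ (2 ∣ (2*n+1)) := by omega
        exact Nat.coprime_comm.mp ((Nat.prime_two.coprime_iff_not_dvd).mpr h2)
      have hcg : Nat.Coprime (((2*n+1 : ℕ) : ℤ)).natAbs (2*N) := by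
        have h1 : (((2*n+1 : ℕ) : ℤ)).natAbs = 2*n+1 := by omega
        rw [h1]
        exact Nat.Coprime.mul_right hodd (Nat.coprime_comm.mp hg)
      set γ : ℚ := ⟨((2*n+1 : ℕ) : ℤ), 2*N, by omega, hcg⟩ with hγdef
      have hγden : γ.den = 2*N := rfl
      have hγnum : γ.num = ((2*n+1 : ℕ) : ℤ) := rfl
      have hγr : (γ:ℝ) = (2*(n:ℝ)+1)/(2*(N:ℝ)) := by
        rw [Rat.cast_def, hγden, hγnum]; push_cast; ring
      have h2n1 : 2*n+1 ≤ 2*N := by omega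
      refine cover_contra N hα γ ⟨?_, ?_, ?_⟩ ?_ ?_
      · rw [← Rat.num_nonneg, hγnum]; positivity
      · have : (γ:ℝ) ≤ 1 := by
          rw [hγr]; rw [div_le_one (by positivity)]
          have : (2*(n:ℝ)+1) ≤ 2*(N:ℝ) := by exact_mod_cast h2n1
          linarith
        exact_mod_cast this
      · rw [hγden]; exact ⟨2, by ring⟩
      · intro h
        have := congrArg Rat.den h
        rw [hγden, ← hbdef] at this
        omega
      · rw [dist_ratCast_complex, hγden, ← hbdef]
        have hφR' : (φ:ℝ) = (a:ℝ)*N - (b:ℝ)*n := by linarith [hφR]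
        have hsub : (α:ℝ) - (γ:ℝ) = (2*(φ:ℝ) - b)/(2*(b:ℝ)*N) := by
          rw [hαr', hγr, hφR']; field_simp; ring
        rw [hsub, abs_div, abs_of_pos (by positivity : (0:ℝ) < 2*(b:ℝ)*N)]
        push_cast
        have habs2 : |2*(φ:ℝ) - (b:ℝ)| ≤ (b:ℝ) - 2*N := by
          rw [abs_le]; constructor <;> nlinarith [hNleφR, hφlebR]
        rw [div_add_div _ _ (by positivity) (by positivity),
          div_le_div_iff₀ (by positivity) (by positivity)]
        nlinarith [habs2, hφlebR, hNleφR, hbR, hNR, mul_pos hbR hNR]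

lemma poleComplexity_zero (N : ℕ) (hN : 1 < N)
    (H : ∀ n, n ≤ N - 1 →
      Nat.gcd N n = 1 ∨ Nat.gcd N (n + 1) = 1 ∨ Nat.gcd N (2 * n + 1) = 1)
    {α : ℚ} (hα : α ∈ SSet N) : poleComplexity (SSet N) α = 0 := by
  unfold poleComplexity
  have he : {β ∈ SSet N | β ≠ α ∧ northPole α ∈ disk β} = (∅ : Set ℚ) := by
    ext β
    simp only [Set.mem_setOf_eq, Set.mem_empty_iff_false, iff_false, not_and]
    intro hβ hne hpole
    exact key N hN H hα hβ hne hpole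
  rw [he, Set.ncard_empty]

lemma cond_of_omega_le_two (N : ℕ) (hN : 1 < N) (hω : N.primeFactors.card ≤ 2) :
    ∀ n, n ≤ N - 1 →
      Nat.gcd N n = 1 ∨ Nat.gcd N (n + 1) = 1 ∨ Nat.gcd N (2 * n + 1) = 1 := by
  intro n _
  by_contra hc
  push_neg at hc
  obtain ⟨h1, h2, h3⟩ := hc
  set p := (Nat.gcd N n).minFac with hpdef
  set q := (Nat.gcd N (n+1)).minFac with hqdef
  set r := (Nat.gcd N (2*n+1)).minFac with hrdef
  have hp : p.Prime := Nat.minFac_prime h1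
  have hq : q.Prime := Nat.minFac_prime h2
  have hr : r.Prime := Nat.minFac_prime h3
  have hpN : p ∣ N := (Nat.minFac_dvd _).trans (Nat.gcd_dvd_left N n)
  have hqN : q ∣ N := (Nat.minFac_dvd _).trans (Nat.gcd_dvd_left N (n+1))
  have hrN : r ∣ N := (Nat.minFac_dvd _).trans (Nat.gcd_dvd_left N (2*n+1))
  have hpn : p ∣ n := (Nat.minFac_dvd _).trans (Nat.gcd_dvd_right N n)
  have hqn : q ∣ n+1 := (Nat.minFac_dvd _).trans (Nat.gcd_dvd_right N (n+1))
  have hrn : r ∣ 2*n+1 := (Nat.minFac_dvd _).trans (Nat.gcd_dvd_right N (2*n+1))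
  have hpq : p ≠ q := by
    intro h
    have := Nat.dvd_sub hqn (h ▸ hpn)
    simp only [Nat.add_sub_cancel_left] at this
    exact hq.one_lt.ne' (Nat.eq_one_of_dvd_one this)
  have hpr : p ≠ r := by
    intro h
    have h2n : p ∣ 2*n := Dvd.dvd.mul_left hpn 2
    have := Nat.dvd_sub (h ▸ hrn) h2n
    simp only [Nat.add_sub_cancel_left] at this
    exact hp.one_lt.ne' (Nat.eq_one_of_dvd_one (h ▸ this))
  have hqr : q ≠ r := by
    intro h
    have h2n : q ∣ 2*n+2 := by
      have : q ∣ 2*(n+1) := Dvd.dvd.mul_left hqn 2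
      simpa [mul_add] using this
    have := Nat.dvd_sub h2n (h ▸ hrn)
    have h1' : 2*n+2 - (2*n+1) = 1 := by omega
    rw [h1'] at this
    exact hq.one_lt.ne' (Nat.eq_one_of_dvd_one this)
  have hsub : ({p, q, r} : Finset ℕ) ⊆ N.primeFactors := by
    intro x hx
    simp only [Finset.mem_insert, Finset.mem_singleton] at hx
    rcases hx with rfl | rfl | rfl
    · exact Nat.mem_primeFactors.mpr ⟨hp, hpN, by omega⟩
    · exact Nat.mem_primeFactors.mpr ⟨hq, hqN, by omega⟩
    · exact Nat.mem_primeFactors.mpr ⟨hr, hrN, by omega⟩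
  have hcard : ({p, q, r} : Finset ℕ).card = 3 := by
    rw [Finset.card_insert_of_notMem (by simp [hpq, hpr]),
      Finset.card_insert_of_notMem (by simp [hqr]), Finset.card_singleton]
  have := Finset.card_le_card hsub
  omega

/-- If for every `0 ≤ n ≤ N-1` one of `n`, `n+1`, `2n+1` is coprime to `N`,
then `c(N) = 0`. In particular, `c(N) = 0` whenever `N` has at most two
distinct prime factors. -/
theorem cN_eq_zero_of_coprime_condition (N : ℕ) (hN : 1 < N) :
    ((∀ n, n ≤ N - 1 →
        Nat.gcd N n = 1 ∨ Nat.gcd N (n + 1) = 1 ∨ Nat.gcd N (2 * n + 1) = 1) →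
      cN N = 0) ∧
    (N.primeFactors.card ≤ 2 → cN N = 0) := by
  have main : (∀ n, n ≤ N - 1 →
      Nat.gcd N n = 1 ∨ Nat.gcd N (n + 1) = 1 ∨ Nat.gcd N (2 * n + 1) = 1) →
      cN N = 0 := by
    intro H
    unfold cN
    rcases (SSet N).eq_empty_or_nonempty with h | h
    · rw [h, Set.image_empty]
      simpa using csSup_empty
    · have himg : poleComplexity (SSet N) '' SSet N = {0} := by
        apply Set.eq_singleton_iff_nonempty_unique_mem.mpr
        refine ⟨h.image _, ?_⟩
        rintro x ⟨α, hα, rfl⟩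
        exact poleComplexity_zero N hN H hα
      rw [himg]
      exact csSup_singleton 0
  exact ⟨main, fun hω => main (cond_of_omega_le_two N hN hω)⟩

end

end Paper
end

section
/- Let (N,n) be a bad pair. Suppose gcd(N, 2n+1) > 1 and gcd(N, 3n+1) = gcd(N, 3n+2) = 1. Then R_{N,n} = D_{(3n+1)/(3N)} ∪ D_{(3n+2)/(3N)}. In particular, c(N,n) = 0. -/
namespace Paper

noncomputable section

set_option maxHeartbeats 2000000


lemma dist_le_iff_sq (z w : ℂ) (r : ℝ) (hr : 0 ≤ r) :
    dist z w ≤ r ↔ (z.re - w.re)^2 + (z.im - w.im)^2 ≤ r^2 := by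
  rw [Complex.dist_eq_re_im]
  constructor
  · intro h
    have h0 : (0:ℝ) ≤ (z.re - w.re)^2 + (z.im - w.im)^2 := by positivity
    calc (z.re - w.re)^2 + (z.im - w.im)^2
        = (√((z.re - w.re)^2 + (z.im - w.im)^2))^2 := (Real.sq_sqrt h0).symm
      _ ≤ r^2 := by gcongr
  · intro h
    calc √((z.re - w.re)^2 + (z.im - w.im)^2) ≤ √(r^2) := Real.sqrt_le_sqrt h
      _ = r := Real.sqrt_sq hr

lemma key_cover (r ρ c x : ℝ) (hr : 0 < r) (hρ : 0 < ρ) (hρr : 4*ρ ≤ 3*r)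
    (hx1 : c - r + ρ ≤ x) (hx2 : x ≤ c + 2*r - ρ) :
    Metric.closedBall (x : ℂ) ρ ⊆
      Metric.closedBall (c : ℂ) r ∪ Metric.closedBall (((c + r : ℝ)) : ℂ) r := by
  intro z hz
  rw [Metric.mem_closedBall, dist_le_iff_sq _ _ _ hρ.le] at hz
  simp only [Complex.ofReal_re, Complex.ofReal_im, sub_zero] at hz
  set u := z.re with hu
  set v := z.im with hv
  have hwl : -ρ ≤ u - x := by nlinarith [sq_nonneg v, sq_nonneg (u - x + ρ)]
  have hwr : u - x ≤ ρ := by nlinarith [sq_nonneg v, sq_nonneg (u - x - ρ)]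
  rcases le_or_gt u (c + r/2) with hcase | hcase
  · left
    rw [Metric.mem_closedBall, dist_le_iff_sq _ _ _ hr.le]
    simp only [Complex.ofReal_re, Complex.ofReal_im, sub_zero, ← hu, ← hv]
    rcases le_or_gt x c with hxc | hxc
    · nlinarith [mul_nonneg (by linarith : (0:ℝ) ≤ r - ρ + (x - c)) (by linarith : (0:ℝ) ≤ r + ρ - (x - c)),
        mul_nonneg (by linarith : (0:ℝ) ≤ c - x) (by linarith : (0:ℝ) ≤ ρ + (u - x))]
    · rcases le_or_gt (u - c) 0 with hs | hs
      · nlinarith [mul_nonneg (by linarith : (0:ℝ) ≤ x - c) (by linarith : (0:ℝ) ≤ -(2*u - c - x))]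
      · nlinarith [mul_nonneg (by linarith : (0:ℝ) ≤ r/2 - (u - c)) (by linarith : (0:ℝ) ≤ r/2 + (u - c)),
          sq_nonneg (u - x)]
  · right
    rw [Metric.mem_closedBall, dist_le_iff_sq _ _ _ hr.le]
    simp only [Complex.ofReal_re, Complex.ofReal_im, sub_zero, ← hu, ← hv]
    rcases le_or_gt (c + r) x with hxc | hxc
    · nlinarith [mul_nonneg (by linarith : (0:ℝ) ≤ r - ρ - (x - (c+r))) (by linarith : (0:ℝ) ≤ r + ρ + (x - (c+r))),
        mul_nonneg (by linarith : (0:ℝ) ≤ x - (c+r)) (by linarith : (0:ℝ) ≤ ρ - (u - x))]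
    · rcases le_or_gt 0 (u - (c+r)) with hs | hs
      · nlinarith [mul_nonneg (by linarith : (0:ℝ) ≤ (c+r) - x) (by linarith : (0:ℝ) ≤ 2*u - (c+r) - x)]
      · nlinarith [mul_nonneg (by linarith : (0:ℝ) ≤ r/2 - ((c+r) - u)) (by linarith : (0:ℝ) ≤ r/2 + ((c+r) - u)),
          sq_nonneg (u - x)]

lemma gcd_contr {N d m : ℕ} (hd : 1 < Nat.gcd N d) (hdvd : Nat.gcd N d ∣ m)
    (hcop : Nat.Coprime m N) : False := by
  have h1 : Nat.gcd N d ∣ Nat.gcd m N := Nat.dvd_gcd hdvd (Nat.gcd_dvd_left N d)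
  rw [hcop] at h1
  have := Nat.le_of_dvd one_pos h1
  omega

lemma classify (N n : ℕ) (hN : 1 < N)
    (hg : 1 < Nat.gcd N n) (hbad : 1 < Nat.gcd N (n + 1))
    (h2 : 1 < Nat.gcd N (2 * n + 1))
    (α : ℚ) (h1 : (n : ℚ) / (N : ℚ) ≤ α) (h2' : α ≤ ((n : ℚ) + 1) / (N : ℚ))
    (hdvd : N ∣ α.den) :
    α = ((3*n+1 : ℕ) : ℚ) / ((3*N : ℕ) : ℚ) ∨ α = ((3*n+2 : ℕ) : ℚ) / ((3*N : ℕ) : ℚ) ∨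
    (4*N ≤ α.den ∧ (n : ℚ)/(N:ℚ) + 1/(α.den:ℚ) ≤ α ∧ α ≤ ((n:ℚ)+1)/(N:ℚ) - 1/(α.den:ℚ)) := by
  obtain ⟨k, hk⟩ := hdvd
  have hdpos : 0 < α.den := α.pos
  have hk0 : 0 < k := by
    rcases Nat.eq_zero_or_pos k with h | h
    · exfalso; rw [h, Nat.mul_zero] at hk; omega
    · exact h
  have hN0 : (0:ℚ) < (N:ℚ) := by positivity
  have hd0 : (0:ℚ) < (α.den:ℚ) := by exact_mod_cast hdpos
  have hαeq : α = (α.num : ℚ) / (α.den : ℚ) := (Rat.num_div_den α).symm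
  have hb1 : (n:ℚ) * (α.den:ℚ) ≤ (α.num:ℚ) * (N:ℚ) := by
    rw [hαeq, div_le_div_iff₀ hN0 hd0] at h1
    exact h1
  have hb2 : (α.num:ℚ) * (N:ℚ) ≤ ((n:ℚ)+1) * (α.den:ℚ) := by
    rw [hαeq, div_le_div_iff₀ hd0 hN0] at h2'
    exact h2'
  have hden : (α.den : ℚ) = (N:ℚ) * (k:ℚ) := by exact_mod_cast congrArg (Nat.cast : ℕ → ℚ) hk
  have hlowZ : ((n*k : ℕ) : ℤ) ≤ α.num := by
    have : ((n*k : ℕ) : ℚ) ≤ (α.num : ℚ) := by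
      push_cast
      push_cast [hden] at hb1
      nlinarith
    exact_mod_cast this
  have hhighZ : α.num ≤ (((n+1)*k : ℕ) : ℤ) := by
    have : (α.num : ℚ) ≤ (((n+1)*k : ℕ) : ℚ) := by
      push_cast
      push_cast [hden] at hb2
      nlinarith
    exact_mod_cast this
  set m := α.num.toNat with hm
  have hnn : 0 ≤ α.num := le_trans (by positivity) hlowZ
  have hmZ : (m : ℤ) = α.num := Int.toNat_of_nonneg hnn
  have hlowN : n*k ≤ m := by omega
  have hhighN : m ≤ (n+1)*k := by omega
  have hnatAbs : α.num.natAbs = m := by omega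
  have hcop : Nat.Coprime m α.den := hnatAbs ▸ α.reduced
  have hcopN : Nat.Coprime m N := Nat.Coprime.coprime_dvd_right ⟨k, hk⟩ hcop
  have hcopk : Nat.Coprime m k := Nat.Coprime.coprime_dvd_right ⟨N, by rw [hk]; ring⟩ hcop
  have hαm : α = (m:ℚ) / ((α.den : ℕ):ℚ) := by
    conv_lhs => rw [hαeq]
    congr 1
    exact_mod_cast hmZ.symm
  have hnum' : α * ((N:ℚ) * (k:ℚ)) = (m:ℚ) := by
    have h0 : α * ((α.den : ℕ):ℚ) = (m:ℚ) := by
      nth_rewrite 1 [hαeq]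
      rw [div_mul_cancel₀ _ (ne_of_gt hd0)]
      exact_mod_cast hmZ.symm
    rw [hden] at h0
    exact h0
  have hk1 : k ≠ 1 := by
    intro h; subst h
    have : m = n ∨ m = n + 1 := by omega
    rcases this with h | h
    · exact gcd_contr hg (h ▸ Nat.gcd_dvd_right N n) hcopN
    · exact gcd_contr hbad (h ▸ Nat.gcd_dvd_right N (n+1)) hcopN
  have hk2 : k ≠ 2 := by
    intro h; subst h
    have : m = 2*n ∨ m = 2*n+1 ∨ m = 2*n+2 := by omega
    rcases this with h | h | h
    · exact gcd_contr hg (h ▸ (Nat.gcd_dvd_right N n).mul_left 2) hcopN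
    · exact gcd_contr h2 (h ▸ Nat.gcd_dvd_right N (2*n+1)) hcopN
    · refine gcd_contr hbad ?_ hcopN
      rw [h, show 2*n+2 = 2*(n+1) by ring]
      exact (Nat.gcd_dvd_right N (n+1)).mul_left 2
  have hk34 : k = 3 ∨ 4 ≤ k := by omega
  rcases hk34 with h3 | h4
  · subst h3
    have : m = 3*n ∨ m = 3*n+1 ∨ m = 3*n+2 ∨ m = 3*n+3 := by omega
    rcases this with h | h | h | h
    · exact absurd hcopN (fun hc => gcd_contr hg (h ▸ (Nat.gcd_dvd_right N n).mul_left 3) hc)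
    · left; rw [hαm, h, hk, Nat.mul_comm N 3]
    · right; left; rw [hαm, h, hk, Nat.mul_comm N 3]
    · refine absurd hcopN (fun hc => gcd_contr hbad ?_ hc)
      rw [h, show 3*n+3 = 3*(n+1) by ring]
      exact (Nat.gcd_dvd_right N (n+1)).mul_left 3
  · right; right
    have hne1 : m ≠ n*k := by
      intro h
      have hdk : k ∣ m := ⟨n, by rw [h]; ring⟩
      have := Nat.dvd_gcd hdk (dvd_refl k)
      rw [hcopk] at this
      have := Nat.le_of_dvd one_pos this
      omega
    have hne2 : m ≠ (n+1)*k := by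
      intro h
      have hdk : k ∣ m := ⟨n+1, by rw [h]; ring⟩
      have := Nat.dvd_gcd hdk (dvd_refl k)
      rw [hcopk] at this
      have := Nat.le_of_dvd one_pos this
      omega
    have hbl : n*k + 1 ≤ m := by omega
    have hbh : m + 1 ≤ (n+1)*k := by omega
    have hblQ : (n:ℚ)*(k:ℚ) + 1 ≤ (m:ℚ) := by exact_mod_cast hbl
    have hbhQ : (m:ℚ) + 1 ≤ ((n:ℚ)+1)*(k:ℚ) := by exact_mod_cast hbh
    have hkQ : (0:ℚ) < (k:ℚ) := by exact_mod_cast hk0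
    refine ⟨?_, ?_, ?_⟩
    · rw [hk]
      calc 4*N = N*4 := Nat.mul_comm 4 N
        _ ≤ N*k := Nat.mul_le_mul_left N h4
    · rw [div_add_div _ _ (ne_of_gt hN0) (ne_of_gt hd0), div_le_iff₀ (by positivity)]
      rw [hden]
      nlinarith [hnum', hblQ, hN0, hkQ]
    · rw [div_sub_div _ _ (ne_of_gt hN0) (ne_of_gt hd0), le_div_iff₀ (by positivity)]
      rw [hden]
      nlinarith [hnum', hbhQ, hN0, hkQ]

lemma northPole_not_mem (p q : ℚ) (hden : p.den = q.den) (hne : p ≠ q) :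
    northPole p ∉ disk q := by
  intro h
  rw [disk, Metric.mem_closedBall, dist_le_iff_sq _ _ _ (by positivity)] at h
  have hnp : northPole p = Complex.ofReal ((p:ℝ)) + Complex.ofReal (1/(p.den:ℝ)) * Complex.I := by
    rw [northPole]
    push_cast
    ring
  rw [hnp] at h
  simp only [Complex.add_re, Complex.add_im, Complex.ofReal_re, Complex.ofReal_im,
    Complex.mul_re, Complex.mul_im, Complex.I_re, Complex.I_im, Complex.ratCast_re,
    Complex.ratCast_im, mul_zero, mul_one, zero_mul, zero_add, add_zero, zero_sub, sub_zero] at h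
  rw [hden] at h
  have hpq : ((p:ℝ)) ≠ ((q:ℝ)) := by exact_mod_cast hne
  have h0 : ((p:ℝ) - (q:ℝ)) ≠ 0 := sub_ne_zero.mpr hpq
  have hpos : 0 < ((p:ℝ) - (q:ℝ))^2 := sq_pos_of_ne_zero h0
  have hq0 : (0:ℝ) < (q.den:ℝ) := by exact_mod_cast q.pos
  nlinarith [h, hpos]



/-- For a bad pair `(N,n)` with `gcd(N,2n+1) > 1` and `gcd(N,3n+1) = gcd(N,3n+2) = 1`,
the region `R_{N,n}` is the union of the two disks `D_{(3n+1)/(3N)}` and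
`D_{(3n+2)/(3N)}`. In particular `c(N,n) = 0`. -/
theorem bad_region_three_points (N n : ℕ) (hN : 1 < N) (hn : n ≤ N - 1)
    (hg : 1 < Nat.gcd N n) (hbad : 1 < Nat.gcd N (n + 1))
    (h2 : 1 < Nat.gcd N (2 * n + 1))
    (h31 : Nat.gcd N (3 * n + 1) = 1) (h32 : Nat.gcd N (3 * n + 2) = 1) :
    RB N n = diskAt (3 * n + 1) (3 * N) ∪ diskAt (3 * n + 2) (3 * N) ∧ cB N n = 0 := by
  have hN0 : (0:ℚ) < (N:ℚ) := by positivity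
  have hNR : (0:ℝ) < (N:ℝ) := by positivity
  have h3N : 0 < 3*N := by omega
  have h3NQ : (0:ℚ) < ((3*N : ℕ):ℚ) := by exact_mod_cast h3N
  set q1 : ℚ := ((3*n+1 : ℕ) : ℚ) / ((3*N : ℕ) : ℚ) with hq1def
  set q2 : ℚ := ((3*n+2 : ℕ) : ℚ) / ((3*N : ℕ) : ℚ) with hq2def
  -- coprimality
  have hc1 : Nat.Coprime (3*n+1) (3*N) := by
    have h3 : Nat.Coprime (3*n+1) 3 := by
      have := (Nat.coprime_add_mul_left_left 1 3 n).mpr (Nat.coprime_one_left 3)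
      rwa [show 1 + 3*n = 3*n+1 by ring] at this
    exact Nat.Coprime.mul_right h3 (Nat.Coprime.symm h31)
  have hc2 : Nat.Coprime (3*n+2) (3*N) := by
    have h3 : Nat.Coprime (3*n+2) 3 := by
      have := (Nat.coprime_add_mul_left_left 2 3 n).mpr (by decide)
      rwa [show 2 + 3*n = 3*n+2 by ring] at this
    exact Nat.Coprime.mul_right h3 (Nat.Coprime.symm h32)
  -- num/den of q1, q2
  have hd1 : q1.den = 3*N := by
    rw [hq1def, show ((3*n+1 : ℕ) : ℚ) / ((3*N : ℕ) : ℚ)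
        = (((3*n+1:ℕ) : ℤ) : ℚ) / (((3*N:ℕ) : ℤ) : ℚ) by push_cast; ring]
    have := Rat.den_div_eq_of_coprime (a := ((3*n+1:ℕ) : ℤ)) (b := ((3*N:ℕ) : ℤ))
      (by exact_mod_cast h3N) (by exact hc1)
    exact_mod_cast this
  have hd2 : q2.den = 3*N := by
    rw [hq2def, show ((3*n+2 : ℕ) : ℚ) / ((3*N : ℕ) : ℚ)
        = (((3*n+2:ℕ) : ℤ) : ℚ) / (((3*N:ℕ) : ℤ) : ℚ) by push_cast; ring]
    have := Rat.den_div_eq_of_coprime (a := ((3*n+2:ℕ) : ℤ)) (b := ((3*N:ℕ) : ℤ))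
      (by exact_mod_cast h3N) (by exact hc2)
    exact_mod_cast this
  have hq12 : q1 ≠ q2 := by
    intro h
    rw [hq1def, hq2def, div_eq_div_iff (ne_of_gt h3NQ) (ne_of_gt h3NQ)] at h
    have : (3*n+1) * (3*N) = (3*n+2) * (3*N) := by exact_mod_cast h
    have := h3N
    nlinarith [this]
  -- membership in candB
  have hq1mem : q1 ∈ candB N n := by
    refine ⟨?_, ?_, ?_⟩
    · rw [hq1def, div_le_div_iff₀ hN0 h3NQ]
      push_cast
      nlinarith
    · rw [hq1def, div_le_div_iff₀ h3NQ hN0]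
      push_cast
      nlinarith
    · rw [hd1]; exact ⟨3, by ring⟩
  have hq2mem : q2 ∈ candB N n := by
    refine ⟨?_, ?_, ?_⟩
    · rw [hq2def, div_le_div_iff₀ hN0 h3NQ]
      push_cast
      nlinarith
    · rw [hq2def, div_le_div_iff₀ h3NQ hN0]
      push_cast
      nlinarith
    · rw [hd2]; exact ⟨3, by ring⟩
  -- disks
  have hdisk1 : disk q1 = diskAt (3*n+1) (3*N) := by
    rw [disk, diskAt, hd1]
    congr 1
    rw [hq1def]
    push_cast
    ring
  have hdisk2 : disk q2 = diskAt (3*n+2) (3*N) := by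
    rw [disk, diskAt, hd2]
    congr 1
    rw [hq2def]
    push_cast
    ring
  -- real centers
  set c : ℝ := (3*(n:ℝ)+1)/(3*(N:ℝ)) with hcdef
  set r : ℝ := 1/(3*(N:ℝ)) with hrdef
  have hrpos : 0 < r := by rw [hrdef]; positivity
  have hNC : ((N:ℕ):ℂ) ≠ 0 := Nat.cast_ne_zero.mpr (by omega)
  have hNR' : ((N:ℕ):ℝ) ≠ 0 := Nat.cast_ne_zero.mpr (by omega)
  have hcent1 : (((3*n+1 : ℕ)):ℂ)/(((3*N : ℕ)):ℂ) = ((c:ℝ):ℂ) := by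
    rw [hcdef]; push_cast; ring
  have hcent2 : (((3*n+2 : ℕ)):ℂ)/(((3*N : ℕ)):ℂ) = (((c+r:ℝ)):ℂ) := by
    rw [hcdef, hrdef]
    push_cast
    field_simp
    ring
  have hrad : (1:ℝ)/(((3*N:ℕ)):ℝ) = r := by
    rw [hrdef]; push_cast; ring
  have hball1 : diskAt (3*n+1) (3*N) = Metric.closedBall ((c:ℝ):ℂ) r := by
    rw [diskAt, hcent1, hrad]
  have hball2 : diskAt (3*n+2) (3*N) = Metric.closedBall (((c+r:ℝ)):ℂ) r := by
    rw [diskAt, hcent2, hrad]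
  -- the covering property
  have hcover : ∀ α ∈ candB N n, α = q1 ∨ α = q2 ∨
      (3*N < α.den ∧ disk α ⊆ diskAt (3*n+1) (3*N) ∪ diskAt (3*n+2) (3*N)) := by
    intro α hα
    obtain ⟨ha1, ha2, ha3⟩ := hα
    rcases classify N n hN hg hbad h2 α ha1 ha2 ha3 with h | h | ⟨hb0, hb1, hb2⟩
    · left; rw [hq1def]; exact h
    · right; left; rw [hq2def]; exact h
    · right; right
      constructor
      · omega
      · rw [hball1, hball2, disk]
        have hdR : (0:ℝ) < (α.den:ℝ) := by exact_mod_cast α.pos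
        have hαC : (α : ℂ) = (((α:ℝ)):ℂ) := by push_cast; ring
        rw [hαC]
        apply key_cover r (1/(α.den:ℝ)) c ((α:ℝ)) hrpos (by positivity)
        · rw [hrdef]
          rw [show (4:ℝ)*(1/(α.den:ℝ)) = 4/(α.den:ℝ) by ring,
            show (3:ℝ)*(1/(3*(N:ℝ))) = 1/(N:ℝ) by field_simp]
          rw [div_le_div_iff₀ hdR hNR]
          have : ((4*N : ℕ):ℝ) ≤ ((α.den : ℕ):ℝ) := by exact_mod_cast hb0
          push_cast at this
          nlinarith
        · have hcast : ((n:ℝ))/(N:ℝ) + 1/((α.den:ℕ):ℝ) ≤ ((α:ℚ):ℝ) := by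
            have h' := (Rat.cast_le (K := ℝ)).mpr hb1
            push_cast at h' ⊢
            convert h' using 2
          have heq : c - r = ((n:ℝ))/(N:ℝ) := by
            rw [hcdef, hrdef]
            rw [div_sub_div _ _ (by positivity) (by positivity), div_eq_div_iff (by positivity) hNR']
            ring
          rw [heq]
          exact hcast
        · have hcast : ((α:ℚ):ℝ) ≤ ((n:ℝ)+1)/(N:ℝ) - 1/((α.den:ℕ):ℝ) := by
            have h' := (Rat.cast_le (K := ℝ)).mpr hb2
            push_cast at h' ⊢
            convert h' using 2
          have heq : c + 2*r = ((n:ℝ)+1)/(N:ℝ) := by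
            rw [hcdef, hrdef]
            field_simp
            ring
          rw [show c + 2*r - 1/((α.den:ℕ):ℝ) = c + 2*r - 1/((α.den:ℕ):ℝ) from rfl, heq]
          exact hcast
  -- part 1 : RB = union of two disks
  have hpart1 : RB N n = diskAt (3 * n + 1) (3 * N) ∪ diskAt (3 * n + 2) (3 * N) := by
    apply Set.Subset.antisymm
    · rw [RB]
      apply Set.iUnion₂_subset
      intro α hα
      rcases hcover α hα with h | h | ⟨_, h⟩
      · rw [h, hdisk1]; exact Set.subset_union_left
      · rw [h, hdisk2]; exact Set.subset_union_right
      · exact h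
    · apply Set.union_subset
      · rw [← hdisk1]; exact Set.subset_biUnion_of_mem hq1mem
      · rw [← hdisk2]; exact Set.subset_biUnion_of_mem hq2mem
  refine ⟨hpart1, ?_⟩
  -- SB is contained in {q1, q2}
  have hSB : SB N n ⊆ {q1, q2} := by
    rintro α ⟨hαc, hnot⟩
    rcases hcover α hαc with h | h | ⟨hden, hsub⟩
    · exact Or.inl h
    · exact Or.inr h
    · exfalso
      apply hnot
      have hne1 : q1 ≠ α := by
        intro h; rw [← h, hd1] at hden; omega
      have hne2 : q2 ≠ α := by
        intro h; rw [← h, hd2] at hden; omega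
      intro z hz
      rcases hsub hz with hz1 | hz2
      · exact Set.mem_biUnion ⟨hq1mem, by simp [hne1]⟩ (hdisk1 ▸ hz1)
      · exact Set.mem_biUnion ⟨hq2mem, by simp [hne2]⟩ (hdisk2 ▸ hz2)
  -- poles
  have hp12 : northPole q1 ∉ disk q2 := northPole_not_mem q1 q2 (by rw [hd1, hd2]) hq12
  have hp21 : northPole q2 ∉ disk q1 := northPole_not_mem q2 q1 (by rw [hd1, hd2]) hq12.symm
  have hzero : ∀ α ∈ SB N n, poleComplexity (SB N n) α = 0 := by
    intro α hα
    have hαq : α = q1 ∨ α = q2 := hSB hα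
    rw [poleComplexity]
    convert Set.ncard_empty ℚ
    rw [Set.eq_empty_iff_forall_notMem]
    rintro β ⟨hβS, hβne, hβmem⟩
    have hβq : β = q1 ∨ β = q2 := hSB hβS
    rcases hαq with h | h <;> rcases hβq with h' | h'
    · exact hβne (h' ▸ h ▸ rfl)
    · exact hp12 (h ▸ h' ▸ hβmem)
    · exact hp21 (h ▸ h' ▸ hβmem)
    · exact hβne (h' ▸ h ▸ rfl)
  rw [cB]
  have himg : poleComplexity (SB N n) '' SB N n ⊆ {0} := by
    rintro x ⟨α, hα, rfl⟩
    exact hzero α hα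
  rcases Set.subset_singleton_iff_eq.mp himg with h | h
  · rw [h]
    exact csSup_empty
  · rw [h]
    exact csSup_singleton 0


end

end Paper
end

section
/- Let (N,n) be a bad pair. Suppose that (a) gcd(N, 2n+1) > 1; (b) gcd(N, 3n+1) = 1 and gcd(N, 3n+2) > 1; (c) gcd(N, 4n+3) = 1. Then R_{N,n} = D_{(3n+1)/(3N)} ∪ D_{(4n+3)/(4N)}. In particular, c(N,n) = 0. -/
namespace Paper

noncomputable section

lemma mem_closedBall_real_iff {c r : ℝ} (hr : 0 ≤ r) (z : ℂ) :
    z ∈ Metric.closedBall (c : ℂ) r ↔ (z.re - c)^2 + z.im^2 ≤ r^2 := by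
  rw [Metric.mem_closedBall, Complex.dist_eq]
  have habs : ‖z - c‖ ^ 2 = (z.re - c)^2 + z.im^2 := by
    rw [Complex.sq_norm, Complex.normSq_apply]
    simp [Complex.sub_re, Complex.sub_im, Complex.ofReal_re, Complex.ofReal_im]
    ring
  constructor
  · intro h
    have := pow_le_pow_left₀ (by positivity) h 2
    rwa [habs] at this
  · intro h
    have : ‖z - c‖ ^ 2 ≤ r ^ 2 := by rw [habs]; exact h
    exact le_of_pow_le_pow_left₀ two_ne_zero hr this

lemma disk_subset_disk (a c : ℤ) (b d : ℕ) (hb : 0 < b) (hd : 0 < d)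
    (h : |a * d - c * b| ≤ (b : ℤ) - d) :
    Metric.closedBall ((a : ℂ) / b) (1 / b) ⊆ Metric.closedBall ((c : ℂ) / d) (1 / d) := by
  have hb' : (0:ℝ) < b := by exact_mod_cast hb
  have hd' : (0:ℝ) < d := by exact_mod_cast hd
  apply Metric.closedBall_subset_closedBall'
  have e1 : ((a : ℂ) / b) = (((a / b : ℝ)) : ℂ) := by push_cast; ring
  have e2 : ((c : ℂ) / d) = (((c / d : ℝ)) : ℂ) := by push_cast; ring
  have e3 : dist ((((a:ℝ)/b) : ℝ) : ℂ) ((((c:ℝ)/d) : ℝ) : ℂ) = |(a:ℝ)/b - (c:ℝ)/d| := by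
    rw [Complex.dist_eq, ← Complex.ofReal_sub, Complex.norm_real, Real.norm_eq_abs]
  rw [e1, e2, e3]
  have hkey : |(a:ℝ)*d - c*b| ≤ (b:ℝ) - d := by exact_mod_cast h
  have h4 : (a:ℝ)/b - c/d = ((a:ℝ)*d - c*b)/(b*d) := by field_simp
  rw [h4, abs_div, abs_of_pos (mul_pos hb' hd')]
  have h2 : |(a:ℝ)*d - c*b| / (b*d) ≤ ((b:ℝ)-d)/(b*d) := by gcongr
  have h3 : ((b:ℝ)-d)/(b*d) = 1/d - 1/b := by
    rw [div_sub_div _ _ hd'.ne' hb'.ne', one_mul, mul_one, mul_comm]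
  linarith

lemma twoDisk (c c1 c2 r r1 r2 x0 : ℝ) (hr1 : 0 ≤ r1) (hr2 : 0 ≤ r2)
    (hc1 : c1 ≤ c) (hc2 : c ≤ c2)
    (h1 : (c - c1) * (2*x0 - c - c1) ≤ r1^2 - r^2)
    (h2 : (c - c2) * (2*x0 - c - c2) ≤ r2^2 - r^2) :
    Metric.closedBall (c:ℂ) r ⊆ Metric.closedBall (c1:ℂ) r1 ∪ Metric.closedBall (c2:ℂ) r2 := by
  intro z hz
  have hr : 0 ≤ r := le_trans dist_nonneg hz
  rw [mem_closedBall_real_iff hr] at hz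
  rcases le_total z.re x0 with h | h
  · left
    rw [mem_closedBall_real_iff hr1]
    nlinarith [mul_nonneg (sub_nonneg.mpr hc1) (sub_nonneg.mpr h)]
  · right
    rw [mem_closedBall_real_iff hr2]
    nlinarith [mul_nonneg (sub_nonneg.mpr hc2) (sub_nonneg.mpr h)]

lemma coprime_contra {d : ℕ} (hd : 1 < d) {num : ℤ} {den : ℕ}
    (hc : num.natAbs.Coprime den) (h1 : (d:ℤ) ∣ num) (h2 : d ∣ den) : False := by
  have h1' : d ∣ num.natAbs := by
    have := Int.natAbs_dvd_natAbs.mpr h1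
    simpa using this
  have h3 : d ∣ 1 := hc ▸ Nat.dvd_gcd h1' h2
  have := Nat.dvd_one.mp h3
  omega

lemma diskAt_eq (a b : ℕ) :
    diskAt a b = Metric.closedBall (((a:ℤ) : ℂ) / (b : ℂ)) (1 / (b : ℝ)) := by
  simp only [diskAt, Int.cast_natCast]

lemma diskAt_eq_real (a b : ℕ) (hb : 0 < b) :
    diskAt a b = Metric.closedBall ((((a:ℝ)/(b:ℝ) : ℝ)) : ℂ) (1 / (b : ℝ)) := by
  rw [diskAt]
  congr 1
  push_cast
  ring

set_option maxHeartbeats 2000000 in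
lemma cand_disk_subset (N n : ℕ) (hN : 1 < N)
    (hg : 1 < Nat.gcd N n) (hbad : 1 < Nat.gcd N (n + 1))
    (h2 : 1 < Nat.gcd N (2 * n + 1))
    (h31 : Nat.gcd N (3 * n + 1) = 1) (h32 : 1 < Nat.gcd N (3 * n + 2))
    (h43 : Nat.gcd N (4 * n + 3) = 1)
    (α : ℚ) (hα : α ∈ candB N n) :
    disk α ⊆ diskAt (3*n+1) (3*N) ∪ diskAt (4*n+3) (4*N) := by
  obtain ⟨hlo, hhi, k, hk⟩ := hα
  have hden0 : 0 < α.den := α.pos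
  have hk0 : 0 < k := by
    rcases Nat.eq_zero_or_pos k with h | h
    · rw [h, Nat.mul_zero] at hk; omega
    · exact h
  have hNQ : (0:ℚ) < N := by exact_mod_cast Nat.lt_of_lt_of_le Nat.zero_lt_one hN.le
  have hdQ : (0:ℚ) < (α.den:ℚ) := by exact_mod_cast hden0
  rw [← Rat.num_div_den α, div_le_div_iff₀ hNQ hdQ] at hlo
  rw [← Rat.num_div_den α, div_le_div_iff₀ hdQ hNQ] at hhi
  have hloZ : (n:ℤ) * (N*k) ≤ α.num * N := by
    have : (n:ℤ) * α.den ≤ α.num * N := by exact_mod_cast hlo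
    rwa [hk] at this
  have hhiZ : α.num * N ≤ ((n:ℤ)+1) * (N*k) := by
    have : α.num * N ≤ ((n:ℤ)+1) * α.den := by exact_mod_cast hhi
    rwa [hk] at this
  have hNZ : (0:ℤ) < N := by exact_mod_cast Nat.lt_of_lt_of_le Nat.zero_lt_one hN.le
  have h1k : (n:ℤ)*k ≤ α.num := by
    have e : (n:ℤ) * (N*k) = ((n:ℤ)*k)*N := by ring
    exact le_of_mul_le_mul_right (by rw [← e]; exact hloZ) hNZ
  have h2k : α.num ≤ ((n:ℤ)+1)*k := by
    have e : ((n:ℤ)+1) * (N*k) = (((n:ℤ)+1)*k)*N := by ring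
    exact le_of_mul_le_mul_right (by rw [← e]; exact hhiZ) hNZ
  set j : ℤ := α.num - n*k with hjdef
  have hnum : α.num = (n:ℤ)*k + j := by omega
  have hj0 : 0 ≤ j := by omega
  have hjk : j ≤ k := by
    have : ((n:ℤ)+1)*k = n*k + k := by ring
    omega
  have hkZ : (1:ℤ) ≤ k := by exact_mod_cast hk0
  have hdisk : disk α = Metric.closedBall ((α.num:ℂ)/(α.den:ℂ)) (1/(α.den:ℝ)) := by
    rw [disk, Rat.cast_def]
  have hdvdden : ∀ d : ℕ, d ∣ N → d ∣ α.den := fun d hd => hk ▸ Dvd.dvd.mul_right hd k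
  rcases (by omega : j = 0 ∨ j = k ∨ (1 ≤ j ∧ 3*j ≤ 2*(k:ℤ)-3) ∨ ((k:ℤ)+2 ≤ 2*j ∧ j ≤ (k:ℤ)-1)
      ∨ ((k:ℤ)=2 ∧ j=1) ∨ ((k:ℤ)=3 ∧ j=2) ∨ ((k:ℤ)=4 ∧ j=2) ∨ ((k:ℤ)=5 ∧ j=3)
      ∨ ((k:ℤ)=7 ∧ j=4)) with h0 | h0 | ⟨ha, hb⟩ | ⟨ha, hb⟩ | ⟨ha, hb⟩ | ⟨ha, hb⟩
      | ⟨ha, hb⟩ | ⟨ha, hb⟩ | ⟨ha, hb⟩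
  · -- j = 0 : num = n*k, contradiction with gcd N n
    exfalso
    refine coprime_contra hg α.reduced ?_ (hdvdden _ (Nat.gcd_dvd_left N n))
    have : α.num = (n:ℤ)*k := by omega
    rw [this]
    exact Dvd.dvd.mul_right (Int.natCast_dvd_natCast.mpr (Nat.gcd_dvd_right N n)) _
  · -- j = k : num = (n+1)*k
    exfalso
    refine coprime_contra hbad α.reduced ?_ (hdvdden _ (Nat.gcd_dvd_left N (n+1)))
    have e : ((n:ℤ)+1)*k = (n:ℤ)*k + k := by ring
    have : α.num = ((n:ℤ)+1)*k := by rw [e]; omega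
    rw [this]
    have : ((Nat.gcd N (n+1) : ℤ)) ∣ ((n:ℤ)+1) := by
      exact_mod_cast Int.natCast_dvd_natCast.mpr (Nat.gcd_dvd_right N (n+1))
    exact Dvd.dvd.mul_right this _
  · -- D1 region
    refine Set.Subset.trans ?_ Set.subset_union_left
    rw [hdisk, diskAt_eq]
    apply disk_subset_disk _ _ _ _ hden0 (by positivity)
    rw [hk]
    push_cast
    rw [hnum, abs_le]
    constructor <;> nlinarith [mul_nonneg hNZ.le (by omega : (0:ℤ) ≤ 3*j - 3),
      mul_nonneg hNZ.le (by omega : (0:ℤ) ≤ 2*(k:ℤ) - 3 - 3*j)]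
  · -- D2 region
    refine Set.Subset.trans ?_ Set.subset_union_right
    rw [hdisk, diskAt_eq]
    apply disk_subset_disk _ _ _ _ hden0 (by positivity)
    rw [hk]
    push_cast
    rw [hnum, abs_le]
    constructor <;> nlinarith [mul_nonneg hNZ.le (by omega : (0:ℤ) ≤ 4*j - 2*(k:ℤ) - 4),
      mul_nonneg hNZ.le (by omega : (0:ℤ) ≤ 4*(k:ℤ) - 4 - 4*j)]
  · -- k = 2, j = 1 : num = 2n+1
    exfalso
    refine coprime_contra h2 α.reduced ?_ (hdvdden _ (Nat.gcd_dvd_left N (2*n+1)))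
    have hk2 : k = 2 := by exact_mod_cast ha
    rw [hk2] at hnum
    have : α.num = ((2*n+1 : ℕ) : ℤ) := by push_cast at hnum ⊢; omega
    rw [this]
    exact Int.natCast_dvd_natCast.mpr (Nat.gcd_dvd_right N (2*n+1))
  · -- k = 3, j = 2 : num = 3n+2
    exfalso
    refine coprime_contra h32 α.reduced ?_ (hdvdden _ (Nat.gcd_dvd_left N (3*n+2)))
    have hk3 : k = 3 := by exact_mod_cast ha
    rw [hk3] at hnum
    have : α.num = ((3*n+2 : ℕ) : ℤ) := by push_cast at hnum ⊢; omega
    rw [this]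
    exact Int.natCast_dvd_natCast.mpr (Nat.gcd_dvd_right N (3*n+2))
  · -- k = 4, j = 2 : num = 4n+2, 2 divides num and den
    exfalso
    have hk4 : k = 4 := by exact_mod_cast ha
    refine coprime_contra (show 1 < 2 by norm_num) α.reduced ?_ ?_
    · rw [hk4] at hnum
      have : α.num = 2*(2*(n:ℤ)+1) := by push_cast at hnum ⊢; omega
      rw [this]; exact Dvd.intro _ rfl
    · rw [hk, hk4]
      exact Dvd.dvd.mul_left ⟨2, rfl⟩ N
  · -- k = 5, j = 3 : two-disk case
    have hk5 : k = 5 := by exact_mod_cast ha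
    have hnum5 : α.num = 5*(n:ℤ)+3 := by rw [hnum, ha, hb]; ring
    have hNR : (0:ℝ) < N := by exact_mod_cast Nat.lt_of_lt_of_le Nat.zero_lt_one hN.le
    have hN0 : (N:ℝ) ≠ 0 := hNR.ne'
    rw [hdisk, diskAt_eq_real _ _ (by positivity), diskAt_eq_real _ _ (by positivity)]
    have hcenter : ((α.num:ℂ)/(α.den:ℂ)) = ((((5*(n:ℝ)+3)/(5*(N:ℝ)) : ℝ)) : ℂ) := by
      rw [hnum5, hk, hk5]
      push_cast
      ring
    have hrad : (1:ℝ)/(α.den:ℝ) = 1/(5*(N:ℝ)) := by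
      rw [hk, hk5]; push_cast; ring_nf
    rw [hcenter, hrad]
    have e1 : ((3*n+1 : ℕ):ℝ)/((3*N : ℕ):ℝ) = (3*(n:ℝ)+1)/(3*(N:ℝ)) := by push_cast; ring
    have e2 : ((4*n+3 : ℕ):ℝ)/((4*N : ℕ):ℝ) = (4*(n:ℝ)+3)/(4*(N:ℝ)) := by push_cast; ring
    have e3 : (1:ℝ)/((3*N : ℕ):ℝ) = 1/(3*(N:ℝ)) := by push_cast; ring
    have e4 : (1:ℝ)/((4*N : ℕ):ℝ) = 1/(4*(N:ℝ)) := by push_cast; ring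
    rw [e1, e2, e3, e4]
    apply twoDisk _ _ _ _ _ _ ((5*(n:ℝ)+3)/(5*(N:ℝ))) (by positivity) (by positivity)
    · rw [div_le_div_iff₀ (by positivity) (by positivity)]; nlinarith
    · rw [div_le_div_iff₀ (by positivity) (by positivity)]; nlinarith
    · have key : ((5*(n:ℝ)+3)/(5*N) - (3*(n:ℝ)+1)/(3*N)) *
          (2*((5*(n:ℝ)+3)/(5*N)) - (5*(n:ℝ)+3)/(5*N) - (3*(n:ℝ)+1)/(3*N))
          = (1/(3*(N:ℝ)))^2 - (1/(5*(N:ℝ)))^2 := by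
        field_simp
        ring
      linarith [key.le]
    · have key : ((5*(n:ℝ)+3)/(5*N) - (4*(n:ℝ)+3)/(4*N)) *
          (2*((5*(n:ℝ)+3)/(5*N)) - (5*(n:ℝ)+3)/(5*N) - (4*(n:ℝ)+3)/(4*N))
          = (1/(4*(N:ℝ)))^2 - (1/(5*(N:ℝ)))^2 := by
        field_simp
        ring
      linarith [key.le]
  · -- k = 7, j = 4 : two-disk case
    have hk7 : k = 7 := by exact_mod_cast ha
    have hnum7 : α.num = 7*(n:ℤ)+4 := by rw [hnum, ha, hb]; ring
    have hNR : (0:ℝ) < N := by exact_mod_cast Nat.lt_of_lt_of_le Nat.zero_lt_one hN.le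
    have hN0 : (N:ℝ) ≠ 0 := hNR.ne'
    rw [hdisk, diskAt_eq_real _ _ (by positivity), diskAt_eq_real _ _ (by positivity)]
    have hcenter : ((α.num:ℂ)/(α.den:ℂ)) = ((((7*(n:ℝ)+4)/(7*(N:ℝ)) : ℝ)) : ℂ) := by
      rw [hnum7, hk, hk7]
      push_cast
      ring
    have hrad : (1:ℝ)/(α.den:ℝ) = 1/(7*(N:ℝ)) := by
      rw [hk, hk7]; push_cast; ring_nf
    rw [hcenter, hrad]
    have e1 : ((3*n+1 : ℕ):ℝ)/((3*N : ℕ):ℝ) = (3*(n:ℝ)+1)/(3*(N:ℝ)) := by push_cast; ring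
    have e2 : ((4*n+3 : ℕ):ℝ)/((4*N : ℕ):ℝ) = (4*(n:ℝ)+3)/(4*(N:ℝ)) := by push_cast; ring
    have e3 : (1:ℝ)/((3*N : ℕ):ℝ) = 1/(3*(N:ℝ)) := by push_cast; ring
    have e4 : (1:ℝ)/((4*N : ℕ):ℝ) = 1/(4*(N:ℝ)) := by push_cast; ring
    rw [e1, e2, e3, e4]
    apply twoDisk _ _ _ _ _ _ ((5*(n:ℝ)+3)/(5*(N:ℝ))) (by positivity) (by positivity)
    · rw [div_le_div_iff₀ (by positivity) (by positivity)]; nlinarith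
    · rw [div_le_div_iff₀ (by positivity) (by positivity)]; nlinarith
    · have key : (1/(3*(N:ℝ)))^2 - (1/(7*(N:ℝ)))^2 -
          ((7*(n:ℝ)+4)/(7*N) - (3*(n:ℝ)+1)/(3*N)) *
          (2*((5*(n:ℝ)+3)/(5*N)) - (7*(n:ℝ)+4)/(7*N) - (3*(n:ℝ)+1)/(3*N))
          = 9/(441*(N:ℝ)^2) := by
        field_simp
        ring
      linarith [key, show (0:ℝ) < 9/(441*(N:ℝ)^2) by positivity]
    · have key : (1/(4*(N:ℝ)))^2 - (1/(7*(N:ℝ)))^2 -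
          ((7*(n:ℝ)+4)/(7*N) - (4*(n:ℝ)+3)/(4*N)) *
          (2*((5*(n:ℝ)+3)/(5*N)) - (7*(n:ℝ)+4)/(7*N) - (4*(n:ℝ)+3)/(4*N))
          = 16/(784*(N:ℝ)^2) := by
        field_simp
        ring
      linarith [key, show (0:ℝ) < 16/(784*(N:ℝ)^2) by positivity]

lemma coprime31 (N n : ℕ) (h31 : Nat.gcd N (3 * n + 1) = 1) : Nat.Coprime (3*n+1) (3*N) :=
  Nat.Coprime.mul_right ((Nat.prime_three.coprime_iff_not_dvd.mpr (by omega)).symm)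
    (Nat.Coprime.symm h31)

lemma coprime43 (N n : ℕ) (h43 : Nat.gcd N (4 * n + 3) = 1) : Nat.Coprime (4*n+3) (4*N) := by
  have h2 : Nat.Coprime (4*n+3) 2 := (Nat.prime_two.coprime_iff_not_dvd.mpr (by omega)).symm
  have h4 : Nat.Coprime (4*n+3) 4 := (by norm_num : (2*2:ℕ) = 4) ▸ h2.mul_right h2
  exact h4.mul_right (Nat.Coprime.symm h43)

lemma disk_eq_real (q : ℚ) :
    disk q = Metric.closedBall (((q:ℝ)):ℂ) (1/(q.den:ℝ)) := by
  rw [disk, Complex.ofReal_ratCast]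

lemma northPole_not_mem_s10 (q : ℚ) (c r : ℝ) (hr : 0 ≤ r)
    (h : r^2 < ((q:ℝ) - c)^2 + (1/(q.den:ℝ))^2) :
    northPole q ∉ Metric.closedBall ((c:ℝ):ℂ) r := by
  rw [mem_closedBall_real_iff hr]
  have hd : Complex.I/(q.den:ℂ) = Complex.I * ((((q.den:ℝ))⁻¹ : ℝ):ℂ) := by
    push_cast
    ring
  have hre : (northPole q).re = (q:ℝ) := by
    rw [northPole, Complex.add_re, hd, Complex.ratCast_re]
    simp [Complex.mul_re, Complex.I_re, Complex.I_im, Complex.ofReal_re, Complex.ofReal_im]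
  have him : (northPole q).im = ((q.den:ℝ))⁻¹ := by
    rw [northPole, Complex.add_im, hd, Complex.ratCast_im]
    simp [Complex.mul_im, Complex.I_re, Complex.I_im, Complex.ofReal_re, Complex.ofReal_im]
  rw [hre, him]
  rw [one_div] at h
  intro hcon
  nlinarith [h, hcon]


set_option maxHeartbeats 2000000 in
/-- For a bad pair `(N,n)` with `gcd(N,2n+1) > 1`, `gcd(N,3n+1) = 1`,
`gcd(N,3n+2) > 1` and `gcd(N,4n+3) = 1`, the region `R_{N,n}` is the union of
the two disks `D_{(3n+1)/(3N)}` and `D_{(4n+3)/(4N)}`. In particular `c(N,n) = 0`. -/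
theorem bad_region_four_points_one (N n : ℕ) (hN : 1 < N) (hn : n ≤ N - 1)
    (hg : 1 < Nat.gcd N n) (hbad : 1 < Nat.gcd N (n + 1))
    (h2 : 1 < Nat.gcd N (2 * n + 1))
    (h31 : Nat.gcd N (3 * n + 1) = 1) (h32 : 1 < Nat.gcd N (3 * n + 2))
    (h43 : Nat.gcd N (4 * n + 3) = 1) :
    RB N n = diskAt (3 * n + 1) (3 * N) ∪ diskAt (4 * n + 3) (4 * N) ∧ cB N n = 0 := by
  have hN0 : 0 < N := by omega
  have hNR : (0:ℝ) < N := by exact_mod_cast hN0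
  have hNQ : (0:ℚ) < N := by exact_mod_cast hN0
  have h3NQ : (0:ℚ) < ((3*N : ℕ) : ℚ) := by positivity
  have h4NQ : (0:ℚ) < ((4*N : ℕ) : ℚ) := by positivity
  have h3N0 : 3*N ≠ 0 := by omega
  have h4N0 : 4*N ≠ 0 := by omega
  set α1 : ℚ := ⟨((3*n+1 : ℕ) : ℤ), 3*N, h3N0, by exact coprime31 N n h31⟩ with hα1def
  set α2 : ℚ := ⟨((4*n+3 : ℕ) : ℤ), 4*N, h4N0, by exact coprime43 N n h43⟩ with hα2def
  have hnum1 : α1.num = ((3*n+1 : ℕ) : ℤ) := rfl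
  have hden1 : α1.den = 3*N := rfl
  have hnum2 : α2.num = ((4*n+3 : ℕ) : ℤ) := rfl
  have hden2 : α2.den = 4*N := rfl
  have hval1 : (α1 : ℝ) = (3*(n:ℝ)+1)/(3*(N:ℝ)) := by
    rw [Rat.cast_def, hnum1, hden1]; push_cast; ring
  have hval2 : (α2 : ℝ) = (4*(n:ℝ)+3)/(4*(N:ℝ)) := by
    rw [Rat.cast_def, hnum2, hden2]; push_cast; ring
  have hdisk1 : disk α1 = diskAt (3*n+1) (3*N) := by
    rw [disk, diskAt, Rat.cast_def, hnum1, hden1]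
    simp only [Int.cast_natCast]
  have hdisk2 : disk α2 = diskAt (4*n+3) (4*N) := by
    rw [disk, diskAt, Rat.cast_def, hnum2, hden2]
    simp only [Int.cast_natCast]
  have hmem1 : α1 ∈ candB N n := by
    refine ⟨?_, ?_, ⟨3, by rw [hden1]; ring⟩⟩
    · rw [← Rat.num_div_den α1, hnum1, hden1, div_le_div_iff₀ hNQ h3NQ]
      push_cast
      nlinarith
    · rw [← Rat.num_div_den α1, hnum1, hden1, div_le_div_iff₀ h3NQ hNQ]
      push_cast
      nlinarith
  have hmem2 : α2 ∈ candB N n := by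
    refine ⟨?_, ?_, ⟨4, by rw [hden2]; ring⟩⟩
    · rw [← Rat.num_div_den α2, hnum2, hden2, div_le_div_iff₀ hNQ h4NQ]
      push_cast
      nlinarith
    · rw [← Rat.num_div_den α2, hnum2, hden2, div_le_div_iff₀ h4NQ hNQ]
      push_cast
      nlinarith
  have hsub : ∀ α ∈ candB N n, disk α ⊆ diskAt (3*n+1) (3*N) ∪ diskAt (4*n+3) (4*N) :=
    fun α hα => cand_disk_subset N n hN hg hbad h2 h31 h32 h43 α hα
  have hRB : RB N n = diskAt (3*n+1) (3*N) ∪ diskAt (4*n+3) (4*N) := by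
    apply Set.Subset.antisymm
    · rw [RB]; exact Set.iUnion₂_subset hsub
    · apply Set.union_subset
      · rw [← hdisk1]; exact Set.subset_biUnion_of_mem hmem1
      · rw [← hdisk2]; exact Set.subset_biUnion_of_mem hmem2
  refine ⟨hRB, ?_⟩
  have hne12 : α1 ≠ α2 := by
    intro h
    have h34 : 3*N = 4*N := by rw [← hden1, ← hden2, h]
    omega
  have hS : ∀ γ ∈ SB N n, γ = α1 ∨ γ = α2 := by
    intro γ hγ
    by_contra hne
    push_neg at hne
    refine hγ.2 (Set.Subset.trans (hsub γ hγ.1) ?_)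
    rw [← hdisk1, ← hdisk2]
    apply Set.union_subset
    · exact Set.subset_biUnion_of_mem
        ⟨hmem1, fun h => hne.1 ((Set.mem_singleton_iff.mp h).symm ▸ rfl)⟩
    · exact Set.subset_biUnion_of_mem
        ⟨hmem2, fun h => hne.2 ((Set.mem_singleton_iff.mp h).symm ▸ rfl)⟩
  have hnp12 : northPole α1 ∉ disk α2 := by
    rw [disk_eq_real]
    apply northPole_not_mem_s10 _ _ _ (by positivity)
    rw [hval1, hval2, hden1, hden2]
    push_cast
    have key : ((3*(n:ℝ)+1)/(3*N) - (4*(n:ℝ)+3)/(4*N))^2 + (1/(3*(N:ℝ)))^2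
        - (1/(4*(N:ℝ)))^2 = 2/(9*(N:ℝ)^2) := by
      field_simp
      ring
    linarith [key, show (0:ℝ) < 2/(9*(N:ℝ)^2) by positivity]
  have hnp21 : northPole α2 ∉ disk α1 := by
    rw [disk_eq_real]
    apply northPole_not_mem_s10 _ _ _ (by positivity)
    rw [hval1, hval2, hden1, hden2]
    push_cast
    have key : ((4*(n:ℝ)+3)/(4*N) - (3*(n:ℝ)+1)/(3*N))^2 + (1/(4*(N:ℝ)))^2
        - (1/(3*(N:ℝ)))^2 = 1/(8*(N:ℝ)^2) := by
      field_simp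
      ring
    linarith [key, show (0:ℝ) < 1/(8*(N:ℝ)^2) by positivity]
  have hpc : ∀ α ∈ SB N n, poleComplexity (SB N n) α = 0 := by
    intro α hαS
    have hset : {β ∈ SB N n | β ≠ α ∧ northPole α ∈ disk β} = (∅ : Set ℚ) := by
      ext β
      simp only [Set.mem_setOf_eq, Set.mem_empty_iff_false, iff_false]
      rintro ⟨hβS, hβne, hβmem⟩
      rcases hS α hαS with hA | hA <;> rcases hS β hβS with hB | hB
      · exact hβne (hB.trans hA.symm)
      · exact hnp12 (by rwa [hA, hB] at hβmem)
      · exact hnp21 (by rwa [hA, hB] at hβmem)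
      · exact hβne (hB.trans hA.symm)
    rw [poleComplexity, hset, Set.ncard_empty]
  rw [cB]
  have himg : poleComplexity (SB N n) '' SB N n ⊆ {0} := by
    rintro m ⟨α, hα, rfl⟩
    exact Set.mem_singleton_iff.mpr (hpc α hα)
  rcases Set.subset_singleton_iff_eq.mp himg with h | h
  · rw [h]; exact csSup_empty
  · rw [h]; exact csSup_singleton 0

end

end Paper
end

section
/- Let N>1 be an integer. If for every integer n with 0 ≤ n ≤ N−1 at least two of the five integers n, n+1, 2n+1, 3n+1, 3n+2 are coprime to N, then c(N) = 0. -/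
namespace Paper

noncomputable section

/-! ### Auxiliary lemmas -/

private lemma real_pole {a b c d : ℝ} (hb : 0 < b) (hd : 0 < d)
    (h : (a/b - c/d)^2 + (1/b)^2 ≤ (1/d)^2) : (a*d - b*c)^2 + d^2 ≤ b^2 := by
  have h2 : ((a/b - c/d)^2 + (1/b)^2) * (b*d)^2 ≤ (1/d)^2 * (b*d)^2 :=
    mul_le_mul_of_nonneg_right h (by positivity)
  have e1 : ((a/b - c/d)^2 + (1/b)^2) * (b*d)^2 = (a*d - b*c)^2 + d^2 := by
    field_simp
  have e2 : (1/d)^2 * (b*d)^2 = b^2 := by field_simp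
  linarith [e1 ▸ e2 ▸ h2]

private lemma real_sub {a b c d : ℝ} (hb : 0 < b) (hd : 0 < d)
    (h : |a*d - b*c| ≤ b - d) : |a/b - c/d| + 1/b ≤ 1/d := by
  have e : a/b - c/d = (a*d - b*c)/(b*d) := by field_simp
  rw [e, abs_div, abs_of_pos (by positivity : (0:ℝ) < b*d)]
  rw [div_add_div _ _ (by positivity : (b*d) ≠ 0) hb.ne', div_le_div_iff₀ (by positivity) hd]
  nlinarith [mul_le_mul_of_nonneg_right h (mul_pos hb hd).le]

private lemma dist_rat_complex (α β : ℚ) : dist (α:ℂ) (β:ℂ) = |(α:ℝ) - (β:ℝ)| := by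
  rw [show (α:ℂ) = ((α:ℝ):ℂ) by push_cast; ring, show (β:ℂ) = ((β:ℝ):ℂ) by push_cast; ring,
    Complex.isometry_ofReal.dist_eq, Real.dist_eq]

private lemma den_pos_real (α : ℚ) : (0:ℝ) < (α.den : ℝ) := by
  exact_mod_cast α.pos

/-- The integer inequality coming from `P_α ∈ D_β`. -/
private lemma pole_int {α β : ℚ} (hmem : northPole α ∈ disk β) :
    (α.num * β.den - α.den * β.num)^2 + (β.den:ℤ)^2 ≤ (α.den:ℤ)^2 := by
  have hb := den_pos_real α
  have hd := den_pos_real β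
  -- extract real inequality
  have h1 : ((α:ℝ) - (β:ℝ))^2 + (1/(α.den:ℝ))^2 ≤ (1/(β.den:ℝ))^2 := by
    have hm : (α:ℂ) + Complex.I / (α.den:ℂ) ∈ Metric.closedBall (β:ℂ) (1/(β.den:ℝ)) := hmem
    rw [Metric.mem_closedBall, dist_eq_norm] at hm
    have hden : (α.den:ℂ) ≠ 0 := by
      exact_mod_cast (Nat.cast_ne_zero (R:=ℂ)).mpr α.den_nz
    have e : (α:ℂ) + Complex.I / (α.den:ℂ) - (β:ℂ) =
        (((α:ℝ) - (β:ℝ)) : ℝ) + ((1/(α.den:ℝ)) : ℝ) * Complex.I := by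
      push_cast
      field_simp
      ring
    rw [e, Complex.norm_add_mul_I] at hm
    have h0 : (0:ℝ) ≤ (1/(β.den:ℝ)) := by positivity
    nlinarith [Real.sq_sqrt (by positivity : (0:ℝ) ≤ ((α:ℝ)-(β:ℝ))^2 + (1/(α.den:ℝ))^2),
      Real.sqrt_nonneg (((α:ℝ)-(β:ℝ))^2 + (1/(α.den:ℝ))^2)]
  have h2 : ((α.num:ℝ)*(β.den:ℝ) - (α.den:ℝ)*(β.num:ℝ))^2 + ((β.den:ℝ))^2 ≤ ((α.den:ℝ))^2 := by
    apply real_pole hb hd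
    rw [Rat.cast_def, Rat.cast_def] at h1
    exact h1
  exact_mod_cast h2

/-- Single-disk covering criterion: if there is another candidate disk that contains
`disk α`, then `α ∉ S_N`. -/
private lemma not_mem_SSet (N : ℕ) (hN : 1 < N) {α : ℚ} (hα : α ∈ cand N) (p q : ℕ)
    (hq0 : q ≠ 0) (hqN : N ∣ q) (hqb : q < α.den) (hcop : Nat.Coprime p q) (hpq : p ≤ q)
    (hdist : |(α.num * q - p * α.den : ℤ)| ≤ (α.den : ℤ) - q) : α ∉ SSet N := by
  intro hS
  apply hS.2
  set β : ℚ := ⟨(p:ℤ), q, hq0, by simpa using hcop⟩ with hβ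
  have hβden : β.den = q := rfl
  have hβnum : β.num = (p:ℤ) := rfl
  have hβr : (β:ℝ) = (p:ℝ) / q := by rw [Rat.cast_def, hβnum, hβden]; norm_num
  have hq0' : (0:ℝ) < (q:ℝ) := by exact_mod_cast Nat.pos_of_ne_zero hq0
  have hsub : disk α ⊆ disk β := by
    unfold disk
    rw [hβden]
    apply Metric.closedBall_subset_closedBall'
    rw [dist_rat_complex]
    have hreal : |(α.num:ℝ)*(q:ℝ) - (α.den:ℝ)*(p:ℝ)| ≤ (α.den:ℝ) - (q:ℝ) := by
      have : |((α.num * q - p * α.den : ℤ) : ℝ)| ≤ (((α.den : ℤ) - q : ℤ) : ℝ) := by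
        rw [← Int.cast_abs]; exact_mod_cast hdist
      push_cast at this
      convert this using 2
      ring
    have := real_sub (den_pos_real α) hq0' hreal
    rw [Rat.cast_def, hβr]
    linarith
  have hβcand : β ∈ cand N := by
    refine ⟨?_, ?_, ?_⟩
    · rw [← Rat.num_nonneg, hβnum]; positivity
    · have : (β:ℝ) ≤ 1 := by rw [hβr]; rw [div_le_one hq0']; exact_mod_cast hpq
      exact_mod_cast this
    · rw [hβden]; exact hqN
  have hβne : β ≠ α := fun he => (by omega : q ≠ α.den) (by rw [← hβden, he])
  exact (Set.Subset.trans hsub (Set.subset_biUnion_of_mem ⟨hβcand, hβne⟩))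

/-- Basic facts about the numerator of a candidate. -/
private lemma num_facts (N : ℕ) (hN : 1 < N) {α : ℚ} (hα : α ∈ cand N) :
    α.num = (α.num.toNat : ℤ) ∧ 1 ≤ α.num.toNat ∧ α.num.toNat < α.den ∧
      Nat.Coprime α.num.toNat α.den := by
  obtain ⟨hα0, hα1, hdvd⟩ := hα
  have hnum : α.num = (α.num.toNat : ℤ) := (Int.toNat_of_nonneg (Rat.num_nonneg.mpr hα0)).symm
  have hden1 : α.den ≠ 1 := by
    intro hd
    rw [hd] at hdvd
    exact absurd (Nat.dvd_one.mp hdvd) (by omega)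
  have hne1 : α ≠ 1 := fun he => hden1 (by rw [he]; rfl)
  have hlt : α.num < α.den := Rat.num_lt_denom_iff.mpr (lt_of_le_of_ne hα1 hne1)
  have hn0 : α.num ≠ 0 := fun h0 => hden1 (by rw [Rat.num_eq_zero.mp h0]; rfl)
  refine ⟨hnum, by omega, by omega, ?_⟩
  have := α.reduced
  rwa [hnum, Int.natAbs_natCast] at this

set_option maxHeartbeats 8000000 in
/-- Structure facts for elements of `S_N` with denominator `N*m`, `m ≥ 2`. -/
private lemma SSet_facts (N : ℕ) (hN : 1 < N)
    (h : ∀ n, n ≤ N - 1 →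
      2 ≤ (([n, n + 1, 2 * n + 1, 3 * n + 1, 3 * n + 2].filter
        (fun m => Nat.gcd N m = 1)).length))
    {α : ℚ} (hαS : α ∈ SSet N) {m : ℕ} (hm : α.den = N * m) (hm2 : 2 ≤ m) :
    m ≤ 3 ∧ Nat.gcd N (α.num.toNat / m) ≠ 1 ∧ Nat.gcd N (α.num.toNat / m + 1) ≠ 1 ∧
      (3 ≤ m → Nat.gcd N (2 * (α.num.toNat / m) + 1) ≠ 1) := by
  have hc : α ∈ cand N := hαS.1
  obtain ⟨hnum, ha1, halt, hcop⟩ := num_facts N hN hc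
  set a := α.num.toNat with ha
  set c := a / m with hcdef
  set s := a % m with hsdef
  have hm0 : 0 < m := by omega
  have hcop_am : Nat.Coprime a m := hcop.coprime_dvd_right ⟨N, by rw [hm]; ring⟩
  have hsc : a = m * c + s := (Nat.div_add_mod a m).symm
  have hs1 : 1 ≤ s := by
    rcases Nat.eq_zero_or_pos s with h0 | hgood; swap
    · exact hgood
    have hdvd : m ∣ a := Nat.dvd_of_mod_eq_zero h0
    have : m ∣ 1 := hcop_am ▸ Nat.dvd_gcd hdvd dvd_rfl
    rw [Nat.dvd_one] at this
    omega
  have hsm : s < m := Nat.mod_lt a hm0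
  have hcN : c < N := by
    rw [hcdef, Nat.div_lt_iff_lt_mul hm0]
    calc a < α.den := halt
    _ = N * m := hm
  have hNpos : (0:ℤ) < (N:ℤ) := by exact_mod_cast (by omega : 0 < N)
  have haz : (a:ℤ) = (m:ℤ) * c + s := by exact_mod_cast hsc
  have hs1' : (1:ℤ) ≤ (s:ℤ) := by exact_mod_cast hs1
  have hsm' : (s:ℤ) ≤ (m:ℤ) - 1 := by omega
  have hm2' : (2:ℤ) ≤ (m:ℤ) := by exact_mod_cast hm2
  -- K1 : gcd N c ≠ 1
  have K1 : Nat.gcd N c ≠ 1 := by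
    intro g
    refine absurd hαS (not_mem_SSet N hN hc c N (by omega) dvd_rfl ?_
      (Nat.coprime_comm.mp g) (by omega) ?_)
    · rw [hm]; nlinarith
    · rw [hnum, hm, abs_le]
      push_cast
      constructor <;>
        nlinarith [haz, mul_nonneg hNpos.le (by omega : (0:ℤ) ≤ (s:ℤ) - 1),
          mul_nonneg hNpos.le (by omega : (0:ℤ) ≤ (m:ℤ) - 1 - s)]
  -- K2 : gcd N (c+1) ≠ 1
  have K2 : Nat.gcd N (c + 1) ≠ 1 := by
    intro g
    refine absurd hαS (not_mem_SSet N hN hc (c+1) N (by omega) dvd_rfl ?_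
      (Nat.coprime_comm.mp g) (by omega) ?_)
    · rw [hm]; nlinarith
    · rw [hnum, hm, abs_le]
      push_cast
      constructor <;>
        nlinarith [haz, mul_nonneg hNpos.le (by omega : (0:ℤ) ≤ (s:ℤ) - 1),
          mul_nonneg hNpos.le (by omega : (0:ℤ) ≤ (m:ℤ) - 1 - s)]
  -- K3 : for m ≥ 3, gcd N (2c+1) ≠ 1
  have K3 : 3 ≤ m → Nat.gcd N (2 * c + 1) ≠ 1 := by
    intro hm3 g
    have hcop2 : Nat.Coprime (2*c+1) 2 :=
      Nat.coprime_comm.mp ((Nat.prime_two.coprime_iff_not_dvd).mpr (by omega))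
    refine absurd hαS (not_mem_SSet N hN hc (2*c+1) (N*2) (by omega) ⟨2, rfl⟩ ?_
      ((Nat.coprime_comm.mp g).mul_right hcop2) (by omega) ?_)
    · rw [hm]; nlinarith
    · rw [hnum, hm, abs_le]
      push_cast
      constructor <;>
        nlinarith [haz, mul_nonneg hNpos.le (by omega : (0:ℤ) ≤ 2*(s:ℤ) - 2),
          mul_nonneg hNpos.le (by omega : (0:ℤ) ≤ 2*((m:ℤ) - 1 - s))]
  -- m ≤ 3, using the hypothesis
  have K4 : m ≤ 3 := by
    by_contra hm4
    push_neg at hm4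
    have hh := h c (by omega)
    have hg45 : Nat.gcd N (3*c+1) = 1 ∧ Nat.gcd N (3*c+2) = 1 := by
      have g1 := K1
      have g2 := K2
      have g3 := K3 (by omega)
      by_contra hcon
      rcases Decidable.em (Nat.gcd N (3*c+1) = 1) with g4|g4 <;>
      rcases Decidable.em (Nat.gcd N (3*c+2) = 1) with g5|g5 <;>
      simp [List.filter_cons, g1, g2, g3, g4, g5] at hh ⊢ <;> tauto
    have hcop3a : Nat.Coprime (3*c+1) 3 :=
      Nat.coprime_comm.mp ((Nat.prime_three.coprime_iff_not_dvd).mpr (by omega))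
    have hcop3b : Nat.Coprime (3*c+2) 3 :=
      Nat.coprime_comm.mp ((Nat.prime_three.coprime_iff_not_dvd).mpr (by omega))
    have hcopsm : Nat.Coprime s m := (Nat.gcd_rec m a).symm.trans (Nat.coprime_comm.mp hcop_am)
    rcases le_or_gt (3*s) (2*m - 3) with hcase | hcase
    · -- use (3c+1)/(3N)
      have hcase' : 3*(s:ℤ) ≤ 2*(m:ℤ) - 3 := by omega
      refine absurd hαS (not_mem_SSet N hN hc (3*c+1) (N*3) (by omega) ⟨3, rfl⟩ ?_
        ((Nat.coprime_comm.mp hg45.1).mul_right hcop3a) (by omega) ?_)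
      · rw [hm]; nlinarith
      · rw [hnum, hm, abs_le]
        push_cast
        constructor <;>
          nlinarith [haz, mul_nonneg hNpos.le (by omega : (0:ℤ) ≤ 3*(s:ℤ) - 3),
            mul_nonneg hNpos.le (by omega : (0:ℤ) ≤ 2*(m:ℤ) - 3 - 3*s)]
    · -- use (3c+2)/(3N); first show m + 3 ≤ 3s
      have hms : m + 3 ≤ 3 * s := by
        rcases Nat.lt_or_ge m 5 with h5 | h5
        · -- m = 4
          have hm4' : m = 4 := by omega
          have : s ≠ 2 := by
            intro hs2
            rw [hs2, hm4'] at hcopsm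
            exact absurd hcopsm (by decide)
          omega
        · omega
      have hms' : (m:ℤ) + 3 ≤ 3*(s:ℤ) := by omega
      refine absurd hαS (not_mem_SSet N hN hc (3*c+2) (N*3) (by omega) ⟨3, rfl⟩ ?_
        ((Nat.coprime_comm.mp hg45.2).mul_right hcop3b) (by omega) ?_)
      · rw [hm]; nlinarith
      · rw [hnum, hm, abs_le]
        push_cast
        constructor <;>
          nlinarith [haz, mul_nonneg hNpos.le (by omega : (0:ℤ) ≤ 3*(s:ℤ) - (m + 3)),
            mul_nonneg hNpos.le (by omega : (0:ℤ) ≤ 3*(m:ℤ) - 3 - 3*s)]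
  exact ⟨K4, K1, K2, K3⟩

set_option maxHeartbeats 8000000 in
/-- The main lemma: under the hypothesis, no north pole of `S_N` lies in
another disk of `S_N`. -/
private lemma pole_not_mem (N : ℕ) (hN : 1 < N)
    (h : ∀ n, n ≤ N - 1 →
      2 ≤ (([n, n + 1, 2 * n + 1, 3 * n + 1, 3 * n + 2].filter
        (fun m => Nat.gcd N m = 1)).length))
    {α β : ℚ} (hα : α ∈ SSet N) (hβ : β ∈ SSet N) (hne : β ≠ α) :
    northPole α ∉ disk β := by
  intro hmem
  obtain ⟨hnumα, ha1, halt, hcopα⟩ := num_facts N hN hα.1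
  obtain ⟨hnumβ, hb1, hblt, hcopβ⟩ := num_facts N hN hβ.1
  set a := α.num.toNat with hadef
  set cβ := β.num.toNat with hcβdef
  obtain ⟨m, hmα⟩ := hα.1.2.2
  obtain ⟨j, hmβ⟩ := hβ.1.2.2
  have hm0 : 0 < m := by
    rcases Nat.eq_zero_or_pos m with h0 | hgood
    · exfalso; have := α.pos; rw [hmα, h0] at this; omega
    · exact hgood
  have hj0 : 0 < j := by
    rcases Nat.eq_zero_or_pos j with h0 | hgood
    · exfalso; have := β.pos; rw [hmβ, h0] at this; omega
    · exact hgood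
  have hNpos : (0:ℤ) < (N:ℤ) := by exact_mod_cast (by omega : 0 < N)
  obtain ⟨u, hudef⟩ : ∃ u : ℤ, u = (a:ℤ) * j - (m:ℤ) * cβ := ⟨_, rfl⟩
  -- the key integer inequality
  have key : u^2 + (j:ℤ)^2 ≤ (m:ℤ)^2 := by
    have hp := pole_int hmem
    have hK : (α.num * β.den - α.den * β.num : ℤ) = (N:ℤ) * u := by
      rw [hnumα, hnumβ, hmα, hmβ, hudef]; push_cast; ring
    have hd2 : ((β.den:ℕ):ℤ) = (N:ℤ) * j := by rw [hmβ]; push_cast; ring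
    have hb2 : ((α.den:ℕ):ℤ) = (N:ℤ) * m := by rw [hmα]; push_cast; ring
    rw [hK, hd2, hb2] at hp
    have e : ((N:ℤ) * u)^2 + ((N:ℤ)*j)^2 = (N:ℤ)^2 * (u^2 + (j:ℤ)^2) := by ring
    have e2 : ((N:ℤ)*m)^2 = (N:ℤ)^2 * (m:ℤ)^2 := by ring
    rw [e, e2] at hp
    exact le_of_mul_le_mul_left hp (by positivity)
  -- u ≠ 0
  have hu0 : u ≠ 0 := by
    intro h0
    have hbody : (a:ℤ) * j - (m:ℤ) * cβ = 0 := hudef ▸ h0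
    have hnat : a * j = m * cβ := by
      have : (a:ℤ) * j = (m:ℤ) * cβ := by linarith
      exact_mod_cast this
    have hcop_am : Nat.Coprime a m := hcopα.coprime_dvd_right ⟨N, by rw [hmα]; ring⟩
    have hmdj : m ∣ j := by
      have hd : m ∣ a * j := ⟨cβ, hnat⟩
      exact (Nat.coprime_comm.mp hcop_am).dvd_of_dvd_mul_left hd
    have hjm : j ≤ m := by
      have hu2 : u^2 = 0 := by rw [h0]; ring
      have h2 : (j:ℤ)^2 ≤ (m:ℤ)^2 := by linarith
      have : (j:ℤ) ≤ (m:ℤ) := by nlinarith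
      exact_mod_cast this
    have hjem : j = m := le_antisymm hjm (Nat.le_of_dvd hj0 hmdj)
    have hden : β.den = α.den := by rw [hmα, hmβ, hjem]
    have hnumeq : β.num = α.num := by
      rw [hnumα, hnumβ]
      have : a = cβ := by
        rw [hjem] at hnat
        exact Nat.eq_of_mul_eq_mul_left hm0 (by linarith [hnat.symm])
      rw [this]
    exact hne (Rat.ext hnumeq hden)
  have hu1 : 1 ≤ u^2 := by rcases lt_or_gt_of_ne hu0 with h'|h' <;> nlinarith
  have hj1 : (1:ℤ) ≤ (j:ℤ) := by exact_mod_cast hj0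
  have hm2 : 2 ≤ m := by
    by_contra hcon
    push_neg at hcon
    interval_cases m <;> push_cast at key <;> nlinarith
  -- structural facts about α
  obtain ⟨hm3, K1, K2, K3⟩ := SSet_facts N hN h hα hmα hm2
  -- arithmetic data about a
  set c := a / m with hcdef
  set s := a % m with hsdef
  have hcop_am : Nat.Coprime a m := hcopα.coprime_dvd_right ⟨N, by rw [hmα]; ring⟩
  have hsc : a = m * c + s := (Nat.div_add_mod a m).symm
  have hs1 : 1 ≤ s := by
    rcases Nat.eq_zero_or_pos s with h0 | hgood; swap
    · exact hgood
    have hdvd : m ∣ a := Nat.dvd_of_mod_eq_zero h0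
    have : m ∣ 1 := hcop_am ▸ Nat.dvd_gcd hdvd dvd_rfl
    rw [Nat.dvd_one] at this
    omega
  have hsm : s < m := Nat.mod_lt a hm0
  -- coprimality of cβ with N (from reducedness of β)
  have hcopβN : Nat.Coprime cβ N := hcopβ.coprime_dvd_right ⟨j, hmβ⟩
  have hgcdNcβ : Nat.gcd N cβ = 1 := Nat.coprime_comm.mp hcopβN
  have haz : (a:ℤ) = (m:ℤ) * c + s := by exact_mod_cast hsc
  -- case analysis on m, j
  interval_cases m
  · -- m = 2 : j = 1, u = ±1, a = 2c+1, cβ ∈ {c, c+1}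
    push_cast at key haz hudef
    have hj : j = 1 := by
      have : (j:ℤ) ≤ 1 := by nlinarith
      omega
    have huu : u = (a:ℤ) - 2 * cβ := by rw [hudef, hj]; push_cast; ring
    have hu : u = 1 ∨ u = -1 := by
      have h2 : u^2 ≤ 3 := by
        rw [hj] at key; push_cast at key; nlinarith
      have hb' : -1 ≤ u ∧ u ≤ 1 := by constructor <;> nlinarith
      omega
    have hcc : cβ = c ∨ cβ = c + 1 := by
      have hsz : (s:ℤ) = 1 := by omega
      omega
    rcases hcc with hcc | hcc <;> rw [hcc] at hgcdNcβ
    · exact K1 hgcdNcβ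
    · exact K2 hgcdNcβ
  · -- m = 3 : j = 1 or 2
    push_cast at key haz hudef
    have hszb : (1:ℤ) ≤ (s:ℤ) ∧ (s:ℤ) ≤ 2 := by constructor <;> omega
    have hj12 : j = 1 ∨ j = 2 := by
      have : (j:ℤ) ≤ 2 := by nlinarith
      omega
    rcases hj12 with hj | hj
    · -- j = 1 : cβ ∈ {c, c+1}
      have huu : u = (a:ℤ) - 3 * cβ := by rw [hudef, hj]; push_cast; ring
      have hub : -2 ≤ u ∧ u ≤ 2 := by
        have h2 : u^2 ≤ 8 := by rw [hj] at key; push_cast at key; nlinarith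
        constructor <;> nlinarith
      have hcc : cβ = c ∨ cβ = c + 1 := by omega
      rcases hcc with hcc | hcc <;> rw [hcc] at hgcdNcβ
      · exact K1 hgcdNcβ
      · exact K2 hgcdNcβ
    · -- j = 2 : cβ = 2c+1
      have huu : u = 2 * (a:ℤ) - 3 * cβ := by rw [hudef, hj]; push_cast; ring
      have hub : -2 ≤ u ∧ u ≤ 2 := by
        have h2 : u^2 ≤ 5 := by rw [hj] at key; push_cast at key; nlinarith
        constructor <;> nlinarith
      -- cβ is odd
      have hcβodd : ¬ (2 ∣ cβ) := by
        intro hdvd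
        have hc2 : Nat.Coprime cβ 2 := hcopβ.coprime_dvd_right ⟨N, by rw [hmβ, hj]; ring⟩
        have : (2:ℕ) ∣ 1 := hc2 ▸ Nat.dvd_gcd hdvd dvd_rfl
        omega
      have hcc : cβ = 2 * c + 1 := by omega
      rw [hcc] at hgcdNcβ
      exact K3 le_rfl hgcdNcβ

/-- If for every `0 ≤ n ≤ N-1` at least two of `n`, `n+1`, `2n+1`, `3n+1`, `3n+2`
are coprime to `N`, then `c(N) = 0`. -/
theorem cN_eq_zero_of_two_coprime (N : ℕ) (hN : 1 < N)
    (h : ∀ n, n ≤ N - 1 →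
      2 ≤ (([n, n + 1, 2 * n + 1, 3 * n + 1, 3 * n + 2].filter
        (fun m => Nat.gcd N m = 1)).length)) :
    cN N = 0 := by
  have hzero : ∀ α ∈ SSet N, poleComplexity (SSet N) α = 0 := by
    intro α hα
    unfold poleComplexity
    have : {β ∈ SSet N | β ≠ α ∧ northPole α ∈ disk β} = ∅ := by
      ext β
      simp only [Set.mem_setOf_eq, Set.mem_empty_iff_false, iff_false, not_and]
      intro hβ hne
      exact pole_not_mem N hN h hα hβ hne
    rw [this, Set.ncard_empty]
  have himg : poleComplexity (SSet N) '' SSet N ⊆ {0} := by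
    rintro x ⟨α, hα, rfl⟩
    exact hzero α hα
  unfold cN
  rcases Set.subset_singleton_iff_eq.mp himg with he | he <;> rw [he]
  · exact csSup_empty
  · exact csSup_singleton 0

end

end Paper
end
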